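/- arXiv:math/0509596 — 3 statements merged into one kernel-verified Lean document; each statement's English description precedes it below -/
import Mathlib

section
/- For every natural number n with n ≥ 3 and n ≠ 6, every automorphism of the symmetric group S_n is inner; that is, for every group automorphism φ of Equiv.Perm (Fin n) there exists a permutation g such that φ is conjugation by g (φ σ = g σ g⁻¹ for all σ). -/
open Equiv Equiv.Perm

namespace SymmAutInner

variable {α : Type*} [Fintype α] [DecidableEq α]

lemma IsSwap.cycleType' {f : Perm α} (h : f.IsSwap) : f.cycleType = {2} := by
  obtain ⟨x, y, hxy, rfl⟩ := h
  rw [(isCycle_swap hxy).cycleType, card_support_swap hxy]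

lemma swap_sq {f : Perm α} (h : f.IsSwap) : f * f = 1 := by
  obtain ⟨x, y, hxy, rfl⟩ := h; exact Equiv.swap_mul_self x y

lemma swap_mul_swap_pow_twelve {s t : Perm α} (hs : s.IsSwap) (ht : t.IsSwap) :
    (s * t) ^ 12 = 1 := by
  rw [← orderOf_dvd_iff_pow_eq_one, ← lcm_cycleType]
  refine Multiset.lcm_dvd.2 fun d hd => ?_
  have h2 : 2 ≤ d := two_le_of_mem_cycleType hd
  have h4 : d ≤ 4 := by
    have := Multiset.single_le_sum (fun x _ => Nat.zero_le x) d hd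
    rw [sum_cycleType] at this
    refine this.trans ?_
    have h := Finset.card_le_card (Finset.le_iff_subset.mp (support_mul_le s t))
    obtain ⟨x, y, hxy, rfl⟩ := hs
    obtain ⟨u, v, huv, rfl⟩ := ht
    calc _ ≤ _ := h
    _ ≤ _ := Finset.card_union_le _ _
    _ ≤ 4 := by rw [card_support_swap hxy, card_support_swap huv]
  interval_cases d <;> norm_num

lemma cycleType_involution {σ : Perm α} (h1 : σ ^ 2 = 1) :
    σ.cycleType = Multiset.replicate (Multiset.card σ.cycleType) 2 := by
  rw [Multiset.eq_replicate_card]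
  intro d hd
  have hdvd : d ∣ 2 := by
    have : d ∣ orderOf σ := by rw [← lcm_cycleType]; exact Multiset.dvd_lcm hd
    exact this.trans (orderOf_dvd_iff_pow_eq_one.2 h1)
  have := two_le_of_mem_cycleType hd
  have := Nat.le_of_dvd (by norm_num) hdvd
  omega


set_option linter.unusedSectionVars false

variable {n : ℕ} (hn : 0 < n)

/-- the i-th point of `Fin n` -/
def c (hn : 0 < n) (i : ℕ) : Fin n := ⟨i % n, Nat.mod_lt _ hn⟩

lemma c_inj {i j : ℕ} (hi : i < n) (hj : j < n) (h : c hn i = c hn j) : i = j := by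
  simpa [c, Nat.mod_eq_of_lt hi, Nat.mod_eq_of_lt hj, Fin.ext_iff] using h

lemma c_ne {i j : ℕ} (hi : i < n) (hj : j < n) (h : i ≠ j) : c hn i ≠ c hn j :=
  fun hc => h (c_inj hn hi hj hc)

/-- product of the swaps determined by a list of (indexes of) pairs -/
def mk (hn : 0 < n) (l : List (ℕ × ℕ)) : Perm (Fin n) :=
  (l.map fun p => Equiv.swap (c hn p.1) (c hn p.2)).prod

@[simp] lemma mk_nil : mk hn ([] : List (ℕ × ℕ)) = 1 := rfl

@[simp] lemma mk_cons (p : ℕ × ℕ) (l : List (ℕ × ℕ)) :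
    mk hn (p :: l) = Equiv.swap (c hn p.1) (c hn p.2) * mk hn l := by
  simp [mk]

/-- bounds condition -/
abbrev Bdd (l : List (ℕ × ℕ)) : Prop := ∀ p ∈ l, p.1 < n ∧ p.2 < n ∧ p.1 ≠ p.2

/-- pairwise disjointness -/
abbrev Pdis (l : List (ℕ × ℕ)) : Prop :=
  l.Pairwise fun p q => p.1 ≠ q.1 ∧ p.1 ≠ q.2 ∧ p.2 ≠ q.1 ∧ p.2 ≠ q.2

lemma disjoint_swap_mk {l : List (ℕ × ℕ)} (hb : Bdd (n := n) l) {a b : ℕ}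
    (ha : a < n) (hbn : b < n)
    (h : ∀ p ∈ l, a ≠ p.1 ∧ a ≠ p.2 ∧ b ≠ p.1 ∧ b ≠ p.2) :
    Perm.Disjoint (Equiv.swap (c hn a) (c hn b)) (mk hn l) := by
  induction l with
  | nil => simpa using disjoint_one_right _
  | cons p l ih =>
    rw [mk_cons]
    obtain ⟨hp1, hp2, hp12⟩ := hb p (List.mem_cons_self ..)
    obtain ⟨h1, h2, h3, h4⟩ := h p (List.mem_cons_self ..)
    refine Perm.Disjoint.mul_right ?_ (ih (fun q hq => hb q (List.mem_cons_of_mem _ hq))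
      (fun q hq => h q (List.mem_cons_of_mem _ hq)))
    rw [disjoint_iff_disjoint_support]
    by_cases hab : a = b
    · subst hab; simp [Equiv.swap_self]
    rw [support_swap (c_ne hn ha hbn hab), support_swap (c_ne hn hp1 hp2 hp12)]
    rw [Finset.disjoint_left]
    intro x hx hx'
    simp only [Finset.mem_insert, Finset.mem_singleton] at hx hx'
    rcases hx with rfl | rfl <;> rcases hx' with h' | h'
    · exact c_ne hn ha hp1 h1 h'
    · exact c_ne hn ha hp2 h2 h'
    · exact c_ne hn hbn hp1 h3 h'
    · exact c_ne hn hbn hp2 h4 h'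

lemma mk_cycleType {l : List (ℕ × ℕ)} (hb : Bdd (n := n) l) (hp : Pdis l) :
    (mk hn l).cycleType = Multiset.replicate l.length 2 := by
  induction l with
  | nil => simp
  | cons p l ih =>
    rw [mk_cons]
    obtain ⟨hp1, hp2, hp12⟩ := hb p (List.mem_cons_self ..)
    replace hp : _ ∧ _ := List.pairwise_cons.mp hp
    have hd : Perm.Disjoint (Equiv.swap (c hn p.1) (c hn p.2)) (mk hn l) :=
      disjoint_swap_mk hn (fun q hq => hb q (List.mem_cons_of_mem _ hq)) hp1 hp2
        (fun q hq => ⟨(hp.1 q hq).1, (hp.1 q hq).2.1, (hp.1 q hq).2.2.1, (hp.1 q hq).2.2.2⟩)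
    rw [hd.cycleType_mul, IsSwap.cycleType' ⟨_, _, c_ne hn hp1 hp2 hp12, rfl⟩,
      ih (fun q hq => hb q (List.mem_cons_of_mem _ hq)) hp.2]
    simp [List.length_cons, Multiset.replicate_succ]
lemma mk_apply_fixed {l : List (ℕ × ℕ)} (hb : Bdd (n := n) l) {a : ℕ} (ha : a < n)
    (h : ∀ p ∈ l, a ≠ p.1 ∧ a ≠ p.2) : mk hn l (c hn a) = c hn a := by
  induction l with
  | nil => simp
  | cons p l ih =>
    obtain ⟨hp1, hp2, hp12⟩ := hb p (List.mem_cons_self ..)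
    obtain ⟨h1, h2⟩ := h p (List.mem_cons_self ..)
    rw [mk_cons, Perm.mul_apply,
      ih (fun q hq => hb q (List.mem_cons_of_mem _ hq)) (fun q hq => h q (List.mem_cons_of_mem _ hq)),
      Equiv.swap_apply_of_ne_of_ne (c_ne hn ha hp1 h1) (c_ne hn ha hp2 h2)]

lemma mk_apply_partner {l : List (ℕ × ℕ)} (hb : Bdd (n := n) l) (hp : Pdis l)
    {a b : ℕ} (h : (a, b) ∈ l) :
    mk hn l (c hn a) = c hn b ∧ mk hn l (c hn b) = c hn a := by
  induction l with
  | nil => simp at h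
  | cons p l ih =>
    obtain ⟨hp1, hp2, hp12⟩ := hb p (List.mem_cons_self ..)
    replace hp : _ ∧ _ := List.pairwise_cons.mp hp
    rcases List.mem_cons.mp h with h | h
    · subst h
      have hfix : ∀ x : ℕ, x < n → (x = a ∨ x = b) → mk hn l (c hn x) = c hn x := by
        intro x hx hxab
        refine mk_apply_fixed hn (fun q hq => hb q (List.mem_cons_of_mem _ hq)) hx ?_
        intro q hq
        obtain ⟨e1, e2, e3, e4⟩ := hp.1 q hq
        rcases hxab with rfl | rfl
        · exact ⟨e1, e2⟩
        · exact ⟨e3, e4⟩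
      constructor
      · rw [mk_cons, Perm.mul_apply, hfix a hp1 (Or.inl rfl)]
        exact Equiv.swap_apply_left _ _
      · rw [mk_cons, Perm.mul_apply, hfix b hp2 (Or.inr rfl)]
        exact Equiv.swap_apply_right _ _
    · obtain ⟨ha, hbn, _⟩ := hb (a, b) (List.mem_cons_of_mem _ h)
      obtain ⟨e1, e2, e3, e4⟩ := hp.1 (a, b) h
      obtain ⟨iha, ihb⟩ := ih (fun q hq => hb q (List.mem_cons_of_mem _ hq)) hp.2 h
      constructor
      · rw [mk_cons, Perm.mul_apply, iha,
          Equiv.swap_apply_of_ne_of_ne (c_ne hn hbn hp1 (Ne.symm e2)) (c_ne hn hbn hp2 (Ne.symm e4))]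
      · rw [mk_cons, Perm.mul_apply, ihb,
          Equiv.swap_apply_of_ne_of_ne (c_ne hn ha hp1 (Ne.symm e1)) (c_ne hn ha hp2 (Ne.symm e3))]

lemma exists_xy {n : ℕ} (hn : 0 < n) {k : ℕ} (hk : 3 ≤ k) (h2k : 2*k ≤ n)
    (hB : n = 2*k → 5 ≤ k) :
    ∃ x y : Perm (Fin n), x.cycleType = Multiset.replicate k 2 ∧
      y.cycleType = Multiset.replicate k 2 ∧ ((x*y)^12) (c hn 0) ≠ c hn 0 := by
  by_cases hA : 2*k+1 ≤ n
  · -- n ≥ 2k+1 : x = (01)(23)·t, y = (12)(34)·t, t on 5..2k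
    set t : List (ℕ × ℕ) := (List.range (k-2)).map (fun j => (5+2*j, 6+2*j)) with ht
    have htmem : ∀ p ∈ t, ∃ j, j < k - 2 ∧ p = (5+2*j, 6+2*j) := by
      intro p hp
      rw [ht, List.mem_map] at hp
      obtain ⟨j, hj, rfl⟩ := hp
      exact ⟨j, List.mem_range.mp hj, rfl⟩
    have htlen : t.length = k - 2 := by rw [ht, List.length_map, List.length_range]
    have htpair : Pdis t := by
      rw [ht]
      refine List.pairwise_map.mpr ((List.pairwise_lt_range).imp ?_)
      intro a b h
      exact ⟨by omega, by omega, by omega, by omega⟩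
    set lx : List (ℕ × ℕ) := [(0,1), (2,3)] ++ t with hlx
    set ly : List (ℕ × ℕ) := [(1,2), (3,4)] ++ t with hly
    have hbx : Bdd (n := n) lx := by
      intro p hp
      rw [hlx, List.mem_append] at hp
      rcases hp with hp | hp
      · fin_cases hp <;> exact ⟨by omega, by omega, by omega⟩
      · obtain ⟨j, hj, rfl⟩ := htmem p hp
        exact ⟨by omega, by omega, by omega⟩
    have hby : Bdd (n := n) ly := by
      intro p hp
      rw [hly, List.mem_append] at hp
      rcases hp with hp | hp
      · fin_cases hp <;> exact ⟨by omega, by omega, by omega⟩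
      · obtain ⟨j, hj, rfl⟩ := htmem p hp
        exact ⟨by omega, by omega, by omega⟩
    have hpx : Pdis lx := by
      rw [hlx]
      refine List.pairwise_append.mpr ⟨by decide, htpair, ?_⟩
      intro a ha b hb
      obtain ⟨j, hj, rfl⟩ := htmem b hb
      fin_cases ha <;> exact ⟨by omega, by omega, by omega, by omega⟩
    have hpy : Pdis ly := by
      rw [hly]
      refine List.pairwise_append.mpr ⟨by decide, htpair, ?_⟩
      intro a ha b hb
      obtain ⟨j, hj, rfl⟩ := htmem b hb
      fin_cases ha <;> exact ⟨by omega, by omega, by omega, by omega⟩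
    refine ⟨mk hn lx, mk hn ly, ?_, ?_, ?_⟩
    · rw [mk_cycleType hn hbx hpx]
      congr 1
      rw [hlx]
      simp [htlen]
      omega
    · rw [mk_cycleType hn hby hpy]
      congr 1
      rw [hly]
      simp [htlen]
      omega
    · have hy0 : mk hn ly (c hn 0) = c hn 0 := by
        refine mk_apply_fixed hn hby (by omega) ?_
        intro p hp
        rw [hly, List.mem_append] at hp
        rcases hp with hp | hp
        · fin_cases hp <;> exact ⟨by omega, by omega⟩
        · obtain ⟨j, hj, rfl⟩ := htmem p hp
          exact ⟨by omega, by omega⟩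
      have hx4 : mk hn lx (c hn 4) = c hn 4 := by
        refine mk_apply_fixed hn hbx (by omega) ?_
        intro p hp
        rw [hlx, List.mem_append] at hp
        rcases hp with hp | hp
        · fin_cases hp <;> exact ⟨by omega, by omega⟩
        · obtain ⟨j, hj, rfl⟩ := htmem p hp
          exact ⟨by omega, by omega⟩
      have hx01 := mk_apply_partner hn hbx hpx (show ((0:ℕ),(1:ℕ)) ∈ lx by rw [hlx]; simp)
      have hx23 := mk_apply_partner hn hbx hpx (show ((2:ℕ),(3:ℕ)) ∈ lx by rw [hlx]; simp)
      have hy12 := mk_apply_partner hn hby hpy (show ((1:ℕ),(2:ℕ)) ∈ ly by rw [hly]; simp)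
      have hy34 := mk_apply_partner hn hby hpy (show ((3:ℕ),(4:ℕ)) ∈ ly by rw [hly]; simp)
      set w := mk hn lx * mk hn ly with hw
      have s0 : w (c hn 0) = c hn 1 := by rw [hw, Perm.mul_apply, hy0, hx01.1]
      have s1 : w (c hn 1) = c hn 3 := by rw [hw, Perm.mul_apply, hy12.1, hx23.1]
      have s3 : w (c hn 3) = c hn 4 := by rw [hw, Perm.mul_apply, hy34.1, hx4]
      have s4 : w (c hn 4) = c hn 2 := by rw [hw, Perm.mul_apply, hy34.2, hx23.2]
      have s2 : w (c hn 2) = c hn 0 := by rw [hw, Perm.mul_apply, hy12.2, hx01.2]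
      have h12 : w^12 = w*w*w*w*w*w*w*w*w*w*w*w := by
        norm_num [pow_succ, mul_assoc]
      rw [h12]
      simp only [Perm.mul_apply, s0, s1, s2, s3, s4]
      exact c_ne hn (by omega) (by omega) (by omega)
  · -- n = 2k, k ≥ 5
    have hn2k : n = 2*k := by omega
    have hk5 : 5 ≤ k := hB hn2k
    set t : List (ℕ × ℕ) := (List.range (k-5)).map (fun j => (10+2*j, 11+2*j)) with ht
    have htmem : ∀ p ∈ t, ∃ j, j < k - 5 ∧ p = (10+2*j, 11+2*j) := by
      intro p hp
      rw [ht, List.mem_map] at hp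
      obtain ⟨j, hj, rfl⟩ := hp
      exact ⟨j, List.mem_range.mp hj, rfl⟩
    have htlen : t.length = k - 5 := by rw [ht, List.length_map, List.length_range]
    have htpair : Pdis t := by
      rw [ht]
      refine List.pairwise_map.mpr ((List.pairwise_lt_range).imp ?_)
      intro a b h
      exact ⟨by omega, by omega, by omega, by omega⟩
    set lx : List (ℕ × ℕ) := [(0,1), (2,3), (4,5), (6,7), (8,9)] ++ t with hlx
    set ly : List (ℕ × ℕ) := [(1,2), (3,4), (5,6), (7,8), (9,0)] ++ t with hly
    have hbx : Bdd (n := n) lx := by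
      intro p hp
      rw [hlx, List.mem_append] at hp
      rcases hp with hp | hp
      · fin_cases hp <;> exact ⟨by omega, by omega, by omega⟩
      · obtain ⟨j, hj, rfl⟩ := htmem p hp
        exact ⟨by omega, by omega, by omega⟩
    have hby : Bdd (n := n) ly := by
      intro p hp
      rw [hly, List.mem_append] at hp
      rcases hp with hp | hp
      · fin_cases hp <;> exact ⟨by omega, by omega, by omega⟩
      · obtain ⟨j, hj, rfl⟩ := htmem p hp
        exact ⟨by omega, by omega, by omega⟩
    have hpx : Pdis lx := by
      rw [hlx]
      refine List.pairwise_append.mpr ⟨by decide, htpair, ?_⟩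
      intro a ha b hb
      obtain ⟨j, hj, rfl⟩ := htmem b hb
      fin_cases ha <;> exact ⟨by omega, by omega, by omega, by omega⟩
    have hpy : Pdis ly := by
      rw [hly]
      refine List.pairwise_append.mpr ⟨by decide, htpair, ?_⟩
      intro a ha b hb
      obtain ⟨j, hj, rfl⟩ := htmem b hb
      fin_cases ha <;> exact ⟨by omega, by omega, by omega, by omega⟩
    refine ⟨mk hn lx, mk hn ly, ?_, ?_, ?_⟩
    · rw [mk_cycleType hn hbx hpx]
      congr 1
      rw [hlx]
      simp [htlen]
      omega
    · rw [mk_cycleType hn hby hpy]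
      congr 1
      rw [hly]
      simp [htlen]
      omega
    · have hx01 := mk_apply_partner hn hbx hpx (show ((0:ℕ),(1:ℕ)) ∈ lx by rw [hlx]; simp)
      have hx23 := mk_apply_partner hn hbx hpx (show ((2:ℕ),(3:ℕ)) ∈ lx by rw [hlx]; simp)
      have hx45 := mk_apply_partner hn hbx hpx (show ((4:ℕ),(5:ℕ)) ∈ lx by rw [hlx]; simp)
      have hx67 := mk_apply_partner hn hbx hpx (show ((6:ℕ),(7:ℕ)) ∈ lx by rw [hlx]; simp)
      have hx89 := mk_apply_partner hn hbx hpx (show ((8:ℕ),(9:ℕ)) ∈ lx by rw [hlx]; simp)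
      have hy12 := mk_apply_partner hn hby hpy (show ((1:ℕ),(2:ℕ)) ∈ ly by rw [hly]; simp)
      have hy34 := mk_apply_partner hn hby hpy (show ((3:ℕ),(4:ℕ)) ∈ ly by rw [hly]; simp)
      have hy56 := mk_apply_partner hn hby hpy (show ((5:ℕ),(6:ℕ)) ∈ ly by rw [hly]; simp)
      have hy78 := mk_apply_partner hn hby hpy (show ((7:ℕ),(8:ℕ)) ∈ ly by rw [hly]; simp)
      have hy90 := mk_apply_partner hn hby hpy (show ((9:ℕ),(0:ℕ)) ∈ ly by rw [hly]; simp)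
      set w := mk hn lx * mk hn ly with hw
      have s0 : w (c hn 0) = c hn 8 := by rw [hw, Perm.mul_apply, hy90.2, hx89.2]
      have s8 : w (c hn 8) = c hn 6 := by rw [hw, Perm.mul_apply, hy78.2, hx67.2]
      have s6 : w (c hn 6) = c hn 4 := by rw [hw, Perm.mul_apply, hy56.2, hx45.2]
      have s4 : w (c hn 4) = c hn 2 := by rw [hw, Perm.mul_apply, hy34.2, hx23.2]
      have s2 : w (c hn 2) = c hn 0 := by rw [hw, Perm.mul_apply, hy12.2, hx01.2]
      have h12 : w^12 = w*w*w*w*w*w*w*w*w*w*w*w := by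
        norm_num [pow_succ, mul_assoc]
      rw [h12]
      simp only [Perm.mul_apply, s0, s2, s4, s6, s8]
      exact c_ne hn (by omega) (by omega) (by omega)
lemma swap_ne_one' {n : ℕ} {i j : Fin n} (h : i ≠ j) : Equiv.swap i j ≠ 1 := by
  intro he
  have := Equiv.ext_iff.mp he i
  rw [Equiv.swap_apply_left] at this
  exact h this.symm

lemma isSwap_map {n : ℕ} (hn3 : 3 ≤ n) (hn6 : n ≠ 6) (φ : MulAut (Perm (Fin n)))
    {τ : Perm (Fin n)} (hτ : τ.IsSwap) : (φ τ).IsSwap := by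
  have hn : 0 < n := by omega
  -- basic facts
  have hτ1 : τ ≠ 1 := by obtain ⟨i, j, hij, rfl⟩ := hτ; exact swap_ne_one' hij
  have hφτ1 : φ τ ≠ 1 := by
    intro h
    exact hτ1 (φ.injective (h.trans (map_one φ.toMonoidHom).symm))
  have hsq : φ τ ^ 2 = 1 := by
    rw [sq, ← map_mul, swap_sq hτ, map_one]
  set k := Multiset.card (φ τ).cycleType with hkdef
  have hct : (φ τ).cycleType = Multiset.replicate k 2 := cycleType_involution hsq
  -- sign
  have hsign : Perm.sign (φ τ) = -1 := by
    have hkey : ∀ σ σ' : Perm (Fin n), IsSwap σ → IsSwap σ' →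
        Perm.sign (φ σ) = Perm.sign (φ σ') := by
      intro σ σ' hσ hσ'
      have hconj : IsConj σ σ' := isConj_iff_cycleType_eq.2 (by
        rw [IsSwap.cycleType' hσ, IsSwap.cycleType' hσ'])
      obtain ⟨u, hu⟩ := isConj_iff.1 hconj
      rw [← hu, map_mul, map_mul, map_inv, map_mul, map_mul, map_inv]
      rcases Int.units_eq_one_or (Perm.sign (φ u)) with h | h <;> simp [h]
    by_contra h
    have h1 : Perm.sign (φ τ) = 1 := by
      rcases Int.units_eq_one_or (Perm.sign (φ τ)) with h' | h'
      · exact h'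
      · exact absurd h' h
    have hall : ∀ ρ : Perm (Fin n), Perm.sign (φ ρ) = 1 := by
      intro ρ
      have hmem : ρ ∈ Subgroup.closure {σ : Perm (Fin n) | IsSwap σ} := by
        rw [Equiv.Perm.closure_isSwap]; trivial
      induction hmem using Subgroup.closure_induction with
      | mem σ hσ => exact (hkey σ τ hσ hτ).trans h1
      | one => simp
      | mul a b _ _ ha hb => rw [map_mul, map_mul, ha, hb, one_mul]
      | inv a _ ha => rw [map_inv, map_inv, ha, inv_one]
    have := hall (φ.symm (Equiv.swap (c hn 0) (c hn 1)))
    rw [MulEquiv.apply_symm_apply,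
      Equiv.Perm.sign_swap (c_ne hn (by omega) (by omega) (by omega))] at this
    exact absurd this (by decide)
  have hodd : Odd k := by
    have hs := Perm.sign_of_cycleType (φ τ)
    rw [hct] at hs
    simp only [Multiset.sum_replicate, Multiset.card_replicate, smul_eq_mul] at hs
    rcases Nat.even_or_odd k with he | ho
    · exfalso
      have : Perm.sign (φ τ) = 1 := by
        rw [hs, Even.neg_one_pow (by obtain ⟨m, hm⟩ := he; exact ⟨3*m, by omega⟩)]
      rw [hsign] at this
      exact absurd this (by decide)
    · exact ho
  have hk1 : 1 ≤ k := by
    by_contra h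
    have hk0 : k = 0 := by omega
    rw [hkdef] at hk0
    exact hφτ1 (card_cycleType_eq_zero.mp hk0)
  by_cases hk : k = 1
  · rw [← card_support_eq_two]
    have := sum_cycleType (φ τ)
    rw [hct, hk] at this
    simpa using this.symm
  -- now k ≥ 3, derive a contradiction
  exfalso
  have hk3 : 3 ≤ k := by
    obtain ⟨m, hm⟩ := hodd; omega
  have h2k : 2 * k ≤ n := by
    have h1 := Finset.card_le_univ (φ τ).support
    have h2 := sum_cycleType (φ τ)
    rw [hct] at h2
    simp only [Multiset.sum_replicate, smul_eq_mul] at h2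
    rw [Fintype.card_fin] at h1
    omega
  obtain ⟨x, y, hx, hy, hxy⟩ := exists_xy hn hk3 h2k (fun h => by obtain ⟨m, hm⟩ := hodd; omega)
  -- transfer to swaps
  have hgetswap : ∀ z : Perm (Fin n), z.cycleType = Multiset.replicate k 2 →
      ∃ a : Perm (Fin n), a.IsSwap ∧ φ a = z := by
    intro z hz
    have hconj : IsConj (φ τ) z := isConj_iff_cycleType_eq.2 (hct.trans hz.symm)
    obtain ⟨u, hu⟩ := isConj_iff.1 hconj
    refine ⟨φ.symm u * τ * (φ.symm u)⁻¹, ?_, ?_⟩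
    · obtain ⟨i, j, hij, rfl⟩ := hτ
      refine ⟨φ.symm u i, φ.symm u j, (Equiv.injective _).ne hij, ?_⟩
      rw [Equiv.swap_apply_apply]
    · rw [map_mul, map_mul, map_inv, MulEquiv.apply_symm_apply, hu]
  obtain ⟨a, ha, hfa⟩ := hgetswap x hx
  obtain ⟨b, hb, hfb⟩ := hgetswap y hy
  have h12 : (x * y) ^ 12 = 1 := by
    rw [← hfa, ← hfb, ← map_mul, ← map_pow, swap_mul_swap_pow_twelve ha hb, map_one]
  rw [h12] at hxy
  exact hxy rfl
lemma isSwap_eq_swap_of_mem_support {n : ℕ} {σ : Perm (Fin n)} (h : σ.IsSwap)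
    {p : Fin n} (hp : p ∈ σ.support) : σ = Equiv.swap p (σ p) := by
  obtain ⟨u, v, huv, rfl⟩ := h
  rw [support_swap huv, Finset.mem_insert, Finset.mem_singleton] at hp
  rcases hp with rfl | rfl
  · rw [Equiv.swap_apply_left]
  · rw [Equiv.swap_apply_right, Equiv.swap_comm]

end SymmAutInner

open SymmAutInner in
theorem symm_group_aut_inner (n : ℕ) (hn : 3 ≤ n) (hn6 : n ≠ 6)
    (φ : MulAut (Equiv.Perm (Fin n))) :
    ∃ g : Equiv.Perm (Fin n), ∀ σ : Equiv.Perm (Fin n), φ σ = g * σ * g⁻¹ := by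
  classical
  have hn0 : 0 < n := by omega
  set z : Fin n := c hn0 0 with hzdef
  set o : Fin n := c hn0 1 with hodef
  have ho : o ≠ z := c_ne hn0 (by omega) (by omega) (by omega)
  set t : Fin n → Equiv.Perm (Fin n) := fun i => Equiv.swap z i with htdef
  set s : Fin n → Equiv.Perm (Fin n) := fun i => φ (t i) with hsdef
  have hswap : ∀ i, i ≠ z → (s i).IsSwap := by
    intro i hi
    exact isSwap_map hn hn6 φ ⟨z, i, Ne.symm hi, rfl⟩
  have ht_ne : ∀ i j, i ≠ z → i ≠ j → t i ≠ t j := by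
    intro i j hi hij h
    have h1 := Equiv.ext_iff.mp h i
    simp only [htdef, Equiv.swap_apply_right] at h1
    rw [Equiv.swap_apply_of_ne_of_ne hi hij] at h1
    exact hi h1.symm
  have hs_ne : ∀ i j, i ≠ z → i ≠ j → s i ≠ s j := by
    intro i j hi hij h
    exact ht_ne i j hi hij (φ.injective h)
  have hmeet : ∀ i j, i ≠ z → j ≠ z → i ≠ j →
      ∃ p, p ∈ (s i).support ∧ p ∈ (s j).support := by
    intro i j hi hj hij
    by_contra hcon
    push_neg at hcon
    have hdis : (s i).Disjoint (s j) :=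
      disjoint_iff_disjoint_support.mpr (Finset.disjoint_left.mpr hcon)
    have hsq : (s i * s j) * (s i * s j) = 1 := by
      have hc : s j * s i = s i * s j := (hdis.commute).symm.eq
      calc (s i * s j) * (s i * s j) = s i * (s j * s i) * s j := by group
      _ = s i * (s i * s j) * s j := by rw [hc]
      _ = (s i * s i) * (s j * s j) := by group
      _ = 1 := by rw [swap_sq (hswap i hi), swap_sq (hswap j hj), one_mul]
    have hsq2 : (t i * t j) * (t i * t j) = 1 := by
      apply φ.injective
      rw [map_mul, map_mul, map_one]
      exact hsq
    have e1 : (t i * t j) z = j := by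
      simp only [htdef, Equiv.Perm.mul_apply, Equiv.swap_apply_left]
      exact Equiv.swap_apply_of_ne_of_ne hj (Ne.symm hij)
    have e2 : (t i * t j) j = i := by
      simp only [htdef, Equiv.Perm.mul_apply, Equiv.swap_apply_right]
      exact Equiv.swap_apply_left z i
    have := Equiv.ext_iff.mp hsq2 z
    rw [Equiv.Perm.mul_apply, e1, e2, Equiv.Perm.one_apply] at this
    exact hi this
  -- find a common point
  have hcommon : ∃ p : Fin n, ∀ i, i ≠ z → p ∈ (s i).support := by
    obtain ⟨a, b, hab, hs1⟩ := hswap o ho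
    have hsupp1 : (s o).support = {a, b} := by rw [hs1]; exact support_swap hab
    by_cases hA : ∀ i, i ≠ z → a ∈ (s i).support
    · exact ⟨a, hA⟩
    by_cases hB : ∀ i, i ≠ z → b ∈ (s i).support
    · exact ⟨b, hB⟩
    exfalso
    push_neg at hA hB
    obtain ⟨j, hj, hja⟩ := hA
    obtain ⟨i, hi, hib⟩ := hB
    have hio : i ≠ o := by
      intro h; rw [h, hsupp1] at hib; simp at hib
    have hjo : j ≠ o := by
      intro h; rw [h, hsupp1] at hja; simp at hja
    have hai : a ∈ (s i).support := by
      obtain ⟨p, hp1, hp2⟩ := hmeet i o hi ho hio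
      rw [hsupp1, Finset.mem_insert, Finset.mem_singleton] at hp2
      rcases hp2 with rfl | rfl
      · exact hp1
      · exact absurd hp1 hib
    have hbj : b ∈ (s j).support := by
      obtain ⟨p, hp1, hp2⟩ := hmeet j o hj ho hjo
      rw [hsupp1, Finset.mem_insert, Finset.mem_singleton] at hp2
      rcases hp2 with rfl | rfl
      · exact absurd hp1 hja
      · exact hp1
    have hij : i ≠ j := by
      intro h; rw [h] at hai; exact hja hai
    set cc := s i a with hccdef
    have hsi : s i = Equiv.swap a cc := isSwap_eq_swap_of_mem_support (hswap i hi) hai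
    have hcca : cc ≠ a := Equiv.Perm.mem_support.mp hai
    have hccb : cc ≠ b := by
      intro h
      apply hib
      rw [hsi, support_swap (Ne.symm hcca), h]
      simp
    set d := s j b with hddef
    have hsj : s j = Equiv.swap b d := isSwap_eq_swap_of_mem_support (hswap j hj) hbj
    have hdb : d ≠ b := Equiv.Perm.mem_support.mp hbj
    have hda : d ≠ a := by
      intro h
      apply hja
      rw [hsj, support_swap (Ne.symm hdb), h]
      simp
    have hab' : a ≠ b := hab
    have hccd : cc = d := by
      obtain ⟨p, hp1, hp2⟩ := hmeet i j hi hj hij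
      rw [hsi, support_swap (Ne.symm hcca), Finset.mem_insert, Finset.mem_singleton] at hp1
      rw [hsj, support_swap (Ne.symm hdb), Finset.mem_insert, Finset.mem_singleton] at hp2
      rcases hp1 with rfl | rfl
      · rcases hp2 with h | h
        · exact absurd h hab'
        · exact absurd h (Ne.symm hda)
      · rcases hp2 with h | h
        · exact absurd h hccb
        · exact h
    rw [← hccd] at hsj
    -- triangle : s o = (a b), s i = (a cc), s j = (b cc) ; kill it
    have hkill : s j * s o * (s j)⁻¹ = s i := by
      rw [hsi, hsj, hs1, ← Equiv.swap_apply_apply]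
      congr 1
      · exact Equiv.swap_apply_of_ne_of_ne hab' (Ne.symm hcca)
      · exact Equiv.swap_apply_left b cc
    have hkill2 : t j * t o * (t j)⁻¹ = t i := by
      apply φ.injective
      rw [map_mul, map_mul, map_inv]
      exact hkill
    have hkill3 : Equiv.swap (t j z) (t j o) = t i := by
      rw [Equiv.swap_apply_apply]; exact hkill2
    simp only [htdef] at hkill3
    rw [Equiv.swap_apply_left] at hkill3
    rw [Equiv.swap_apply_of_ne_of_ne ho (Ne.symm hjo)] at hkill3
    have := Equiv.ext_iff.mp hkill3 z
    rw [Equiv.swap_apply_of_ne_of_ne (Ne.symm hj) (Ne.symm ho), Equiv.swap_apply_left] at this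
    exact hi this.symm
  obtain ⟨a, hA⟩ := hcommon
  have hsa : ∀ i, i ≠ z → s i = Equiv.swap a (s i a) :=
    fun i hi => isSwap_eq_swap_of_mem_support (hswap i hi) (hA i hi)
  have hsa' : ∀ i, i ≠ z → s i a ≠ a :=
    fun i hi => Equiv.Perm.mem_support.mp (hA i hi)
  set dd : Fin n → Fin n := fun x => if x = z then a else s x a with hdddef
  have hinj : Function.Injective dd := by
    intro u v h
    simp only [hdddef] at h
    by_cases hu : u = z <;> by_cases hv : v = z
    · rw [hu, hv]
    · rw [if_pos hu, if_neg hv] at h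
      exact absurd h.symm (hsa' v hv)
    · rw [if_neg hu, if_pos hv] at h
      exact absurd h (hsa' u hu)
    · rw [if_neg hu, if_neg hv] at h
      by_contra huv
      refine hs_ne u v hu huv ?_
      rw [hsa u hu, hsa v hv, h]
  set g : Equiv.Perm (Fin n) := Equiv.ofBijective dd (Finite.injective_iff_bijective.mp hinj)
    with hgdef
  have hgapp : ∀ x, g x = dd x := fun x => rfl
  have hgz : g z = a := by rw [hgapp, hdddef]; simp
  have hgen : ∀ i, i ≠ z → φ (t i) = g * t i * g⁻¹ := by
    intro i hi
    simp only [htdef]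
    rw [← Equiv.swap_apply_apply, hgz]
    have hgi : g i = s i a := by rw [hgapp, hdddef]; simp [hi]
    rw [hgi, ← hsa i hi, hsdef]
  have hswaps : ∀ u v : Fin n, u ≠ v → φ (Equiv.swap u v) = g * Equiv.swap u v * g⁻¹ := by
    intro u v huv
    by_cases hu : u = z
    · subst hu
      exact hgen v (Ne.symm huv)
    by_cases hv : v = z
    · subst hv
      rw [Equiv.swap_comm]
      exact hgen u hu
    have h1 : Equiv.swap u v = t u * t v * (t u)⁻¹ := by
      simp only [htdef]
      rw [← Equiv.swap_apply_apply, Equiv.swap_apply_left,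
        Equiv.swap_apply_of_ne_of_ne hv (Ne.symm huv)]
    rw [h1, map_mul, map_mul, map_inv, hgen u hu, hgen v hv]
    group
  refine ⟨g, ?_⟩
  intro σ
  have hmem : σ ∈ Subgroup.closure {f : Equiv.Perm (Fin n) | f.IsSwap} := by
    rw [Equiv.Perm.closure_isSwap]; trivial
  induction hmem using Subgroup.closure_induction with
  | mem f hf => obtain ⟨u, v, huv, rfl⟩ := hf; exact hswaps u v huv
  | one => simp
  | mul p q _ _ hp hq => rw [map_mul, hp, hq]; group
  | inv p _ hp => rw [map_inv, hp]; group
end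

section
/- Let n be a natural number with n ≥ 3 and n ≠ 6. For every group G that is isomorphic to the symmetric group S_n (i.e. there is a group isomorphism G ≃* Equiv.Perm (Fin n)), the automorphism group MulAut G is again isomorphic to S_n. Consequently the iterated automorphism groups stabilize: Aut^k(S_n) is isomorphic to S_n for every k. -/
open Equiv Equiv.Perm
set_option linter.unusedSectionVars false
set_option maxHeartbeats 1000000
namespace AutSn
variable {α : Type*} [DecidableEq α] [Fintype α]

def P (s : Perm α) : Prop :=
  (∃ u, IsConj s u ∧ s * u ≠ 1 ∧ (s * u) ^ 3 = 1) ∧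
  (∀ u, IsConj s u → (s * u) ^ 6 = 1)

theorem disjoint_swap {a b c d : α} (hca : c ≠ a) (hcb : c ≠ b) (hda : d ≠ a) (hdb : d ≠ b) :
    Disjoint (swap a b) (swap c d) := by
  intro x
  by_cases hxa : x = a
  · subst hxa; right; exact swap_apply_of_ne_of_ne (Ne.symm hca) (Ne.symm hda)
  by_cases hxb : x = b
  · subst hxb; right; exact swap_apply_of_ne_of_ne (Ne.symm hcb) (Ne.symm hdb)
  · left; exact swap_apply_of_ne_of_ne hxa hxb

theorem cycleType_swap' {a b : α} (h : a ≠ b) : (swap a b).cycleType = {2} := by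
  have := (isCycle_swap h).cycleType
  rwa [card_support_swap h] at this

theorem swap_sq {a b : α} : swap a b * swap a b = 1 := by rw [swap_mul_self]

theorem commute_swap_of {s : Perm α} {a b : α} (ha : s a = b) (hb : s b = a) :
    Commute s (swap a b) := by
  ext x
  simp only [Perm.coe_mul, Function.comp_apply]
  by_cases hxa : x = a
  · subst hxa; rw [swap_apply_left, hb, ha, swap_apply_right]
  by_cases hxb : x = b
  · subst hxb; rw [swap_apply_right, ha, hb, swap_apply_left]
  · rw [swap_apply_of_ne_of_ne hxa hxb, swap_apply_of_ne_of_ne]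
    · intro h; exact hxb (s.injective (h.trans hb.symm))
    · intro h; exact hxa (s.injective (h.trans ha.symm))

theorem pow_six_swap_mul_swap {a b c d : α} (hab : a ≠ b) (hcd : c ≠ d) :
    (swap a b * swap c d) ^ 6 = 1 := by
  have key : ∀ x y z : α, x ≠ y → x ≠ z → y ≠ z → (swap x y * swap x z) ^ 6 = 1 := by
    intro x y z h1 h2 h3
    have h := (isThreeCycle_swap_mul_swap_same h1 h2 h3).orderOf
    rw [← orderOf_dvd_iff_pow_eq_one, h]
    decide
  by_cases hca : c = a
  · rw [hca]
    by_cases hdb : d = b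
    · rw [hdb, swap_sq, one_pow]
    · exact key a b d hab (hca ▸ hcd) (fun h => hdb h.symm)
  by_cases hcb : c = b
  · rw [hcb, swap_comm a b]
    by_cases hda : d = a
    · rw [hda, swap_sq, one_pow]
    · exact key b a d (fun h => hab h.symm) (hcb ▸ hcd) (fun h => hda h.symm)
  by_cases hda : d = a
  · rw [hda, swap_comm c a]
    exact key a b c hab (fun h => hca h.symm) (fun h => hcb h.symm)
  by_cases hdb : d = b
  · rw [hdb, swap_comm a b, swap_comm c b]
    exact key b a c (fun h => hab h.symm) (fun h => hcb h.symm) (fun h => hca h.symm)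
  · have hcomm := (disjoint_swap hca hcb hda hdb).commute
    have h2 : (swap a b * swap c d) ^ 2 = 1 := by
      rw [pow_two, mul_assoc, ← mul_assoc (swap c d), ← hcomm.eq, mul_assoc, swap_sq, mul_one,
        swap_sq]
    rw [show (6 : ℕ) = 2 * 3 by norm_num, pow_mul, h2, one_pow]

theorem isSwap_of_isConj_isSwap {s u : Perm α} (hs : IsSwap s) (h : IsConj s u) : IsSwap u := by
  obtain ⟨a, b, hab, rfl⟩ := hs
  rw [isConj_iff] at h
  obtain ⟨c, rfl⟩ := h
  rw [← Equiv.swap_apply_apply]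
  exact ⟨c a, c b, fun hh => hab (c.injective hh), rfl⟩

theorem P_of_isSwap (hcard : 3 ≤ Fintype.card α) {s : Perm α} (hs : IsSwap s) : P s := by
  obtain ⟨a, b, hab, rfl⟩ := hs
  constructor
  · -- existence of a conjugate with product a 3-cycle
    have : ∃ c, c ≠ a ∧ c ≠ b := by
      by_contra hc
      push_neg at hc
      have : (Finset.univ : Finset α) ⊆ {a, b} := by
        intro x _
        rcases eq_or_ne x a with h | h
        · simp [h]
        · simp [hc x h]
      have := Finset.card_le_card this
      simp only [Finset.card_univ] at this
      have h2 : ({a, b} : Finset α).card ≤ 2 := Finset.card_insert_le _ _ |>.trans (by simp)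
      omega
    obtain ⟨c, hca, hcb⟩ := this
    refine ⟨swap a c, ?_, ?_, ?_⟩
    · rw [isConj_iff_cycleType_eq, cycleType_swap' hab, cycleType_swap' (Ne.symm hca)]
    · intro h
      have := congrArg (fun f : Perm α => f b) h
      simp only [Perm.coe_mul, Function.comp_apply, Perm.one_apply] at this
      rw [swap_apply_of_ne_of_ne (Ne.symm hab) (Ne.symm hcb), swap_apply_right] at this
      exact hab this
    · have h := (isThreeCycle_swap_mul_swap_same hab (Ne.symm hca)
        (fun h => hcb h.symm)).orderOf
      rw [← orderOf_dvd_iff_pow_eq_one, h]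
  · intro u hu
    rw [isConj_iff_cycleType_eq, cycleType_swap' hab] at hu
    have hcardu : u.support.card = 2 := by
      rw [← sum_cycleType, ← hu]; rfl
    obtain ⟨c, d, hcd, rfl⟩ := card_support_eq_two.mp hcardu
    exact pow_six_swap_mul_swap hab hcd

theorem sq_one_mul {x y : Perm α} (hx : x * x = 1) (hy : y * y = 1) (h : Commute x y) :
    (x * y) * (x * y) = 1 := by
  rw [mul_assoc, ← mul_assoc y, ← h.eq, mul_assoc, hy, mul_one, hx]

/-- The 5-point construction: an involution with two 2-cycles and a fixed point fails `P`. -/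
theorem not_P_five {s : Perm α} (hs : s * s = 1) {a b c d e : α}
    (sa : s a = b) (sc : s c = d) (se : s e = e)
    (hab : a ≠ b) (hcd : c ≠ d) (hca : c ≠ a) (hcb : c ≠ b) : ¬ P s := by
  have hinv : ∀ x, s (s x) = x := fun x => by
    have := congrArg (fun f : Perm α => f x) hs
    simpa using this
  have sb : s b = a := by rw [← sa, hinv]
  have sd : s d = c := by rw [← sc, hinv]
  have hda : d ≠ a := fun h => hcb (by rw [← sd, h, sa])
  have hdb : d ≠ b := fun h => hca (by rw [← sd, h, sb])
  have hea : e ≠ a := fun h => hab (by rw [← sa, ← h, se, h])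
  have heb : e ≠ b := fun h => hab (by rw [← sb, ← h, se, h])
  have hec : e ≠ c := fun h => hcd (by rw [← sc, ← h, se, h])
  have hed : e ≠ d := fun h => hcd (by rw [← sd, ← h, se, h])
  intro hP
  set q : Perm α := swap a b * swap c d with hq
  set q' : Perm α := swap b c * swap d e with hq'
  set r : Perm α := s * q with hr
  -- commutation facts
  have hsq : Commute s q := ((commute_swap_of sa sb).mul_right (commute_swap_of sc sd))
  have hqq : q * q = 1 := by
    have hcsw : Commute (swap a b) (swap c d) := (disjoint_swap hca hcb hda hdb).commute
    rw [hq, mul_assoc, ← mul_assoc (swap c d), ← hcsw.eq, mul_assoc, swap_sq, mul_one, swap_sq]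
  have hrq : r * q = s := by rw [hr, mul_assoc, hqq, mul_one]
  have hrr : r * r = 1 := by
    rw [hr, mul_assoc, ← mul_assoc q, ← hsq.eq, mul_assoc, hqq, mul_one, hs]
  -- pointwise values of r
  have hrval : ∀ x, r x = s (swap a b (swap c d x)) := fun x => rfl
  have hra : r a = a := by rw [hrval, swap_apply_of_ne_of_ne (Ne.symm hca) (Ne.symm hda),
    swap_apply_left, sb]
  have hrb : r b = b := by rw [hrval, swap_apply_of_ne_of_ne (Ne.symm hcb) (Ne.symm hdb),
    swap_apply_right, sa]
  have hrc : r c = c := by rw [hrval, swap_apply_left,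
    swap_apply_of_ne_of_ne hda hdb, sd]
  have hrd : r d = d := by rw [hrval, swap_apply_right,
    swap_apply_of_ne_of_ne hca hcb, sc]
  have hre : r e = e := by rw [hrval, swap_apply_of_ne_of_ne hec hed,
    swap_apply_of_ne_of_ne hea heb, se]
  have hrother : ∀ x, x ≠ a → x ≠ b → x ≠ c → x ≠ d → r x = s x := by
    intro x h1 h2 h3 h4
    rw [hrval, swap_apply_of_ne_of_ne h3 h4, swap_apply_of_ne_of_ne h1 h2]
  -- disjointness of r from q and q'
  have hdisj1 : Disjoint r q := by
    intro x
    by_cases h1 : x = a; · left; rw [h1, hra]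
    by_cases h2 : x = b; · left; rw [h2, hrb]
    by_cases h3 : x = c; · left; rw [h3, hrc]
    by_cases h4 : x = d; · left; rw [h4, hrd]
    · right
      show swap a b (swap c d x) = x
      rw [swap_apply_of_ne_of_ne h3 h4, swap_apply_of_ne_of_ne h1 h2]
  have hdisj2 : Disjoint r q' := by
    intro x
    by_cases h1 : x = b; · left; rw [h1, hrb]
    by_cases h2 : x = c; · left; rw [h2, hrc]
    by_cases h3 : x = d; · left; rw [h3, hrd]
    by_cases h4 : x = e; · left; rw [h4, hre]
    · right
      show swap b c (swap d e x) = x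
      rw [swap_apply_of_ne_of_ne h3 h4, swap_apply_of_ne_of_ne h1 h2]
  -- cycle types
  have hct_q : q.cycleType = {2, 2} := by
    rw [hq, (disjoint_swap hca hcb hda hdb).cycleType_mul, cycleType_swap' hab, cycleType_swap' hcd]
    rfl
  have hct_q' : q'.cycleType = {2, 2} := by
    rw [hq', (disjoint_swap hdb (Ne.symm hcd) heb hec).cycleType_mul,
      cycleType_swap' (Ne.symm hcb), cycleType_swap' (Ne.symm hed)]
    rfl
  -- the conjugate u
  set u : Perm α := r * q' with hu
  have hconj : IsConj s u := by
    rw [isConj_iff_cycleType_eq, ← hrq, hdisj1.cycleType_mul, hu, hdisj2.cycleType_mul, hct_q, hct_q']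
  -- s * u = q * q'
  have hqr : Commute q r := hdisj1.commute.symm
  have hsu : s * u = q * q' := by
    rw [← hrq, hu]
    calc r * q * (r * q') = r * (q * r) * q' := by group
      _ = r * (r * q) * q' := by rw [hqr.eq]
      _ = r * r * (q * q') := by group
      _ = q * q' := by rw [hrr, one_mul]
  -- pointwise values of v := q * q'
  have hv6 := hP.2 u hconj
  rw [hsu] at hv6
  set v : Perm α := q * q' with hv
  have hvval : ∀ x, v x = swap a b (swap c d (swap b c (swap d e x))) := fun x => rfl
  have hva : v a = b := by
    simp [hvval, swap_apply_def, hab, hab.symm, hcd, hcd.symm, hca, hca.symm, hcb, hcb.symm,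
      hda, hda.symm, hdb, hdb.symm, hea, hea.symm, heb, heb.symm, hec, hec.symm, hed, hed.symm]
  have hvb : v b = d := by
    simp [hvval, swap_apply_def, hab, hab.symm, hcd, hcd.symm, hca, hca.symm, hcb, hcb.symm,
      hda, hda.symm, hdb, hdb.symm, hea, hea.symm, heb, heb.symm, hec, hec.symm, hed, hed.symm]
  have hvd : v d = e := by
    simp [hvval, swap_apply_def, hab, hab.symm, hcd, hcd.symm, hca, hca.symm, hcb, hcb.symm,
      hda, hda.symm, hdb, hdb.symm, hea, hea.symm, heb, heb.symm, hec, hec.symm, hed, hed.symm]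
  have hve : v e = c := by
    simp [hvval, swap_apply_def, hab, hab.symm, hcd, hcd.symm, hca, hca.symm, hcb, hcb.symm,
      hda, hda.symm, hdb, hdb.symm, hea, hea.symm, heb, heb.symm, hec, hec.symm, hed, hed.symm]
  have hvc : v c = a := by
    simp [hvval, swap_apply_def, hab, hab.symm, hcd, hcd.symm, hca, hca.symm, hcb, hcb.symm,
      hda, hda.symm, hdb, hdb.symm, hea, hea.symm, heb, heb.symm, hec, hec.symm, hed, hed.symm]
  have : (v ^ 6) a = b := by
    have h6 : v ^ 6 = v * v * v * v * v * v := by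
      rw [show (6:ℕ) = 5+1 from rfl, pow_succ, show (5:ℕ) = 4+1 from rfl, pow_succ,
        show (4:ℕ) = 3+1 from rfl, pow_succ, show (3:ℕ) = 2+1 from rfl, pow_succ, pow_two]
    rw [h6]
    simp only [Perm.mul_apply, hva, hvb, hvd, hve, hvc]
  rw [hv6] at this
  simp only [Perm.one_apply] at this
  exact hab this
/-- The 8-point construction: an involution with four 2-cycles fails `P`. -/
theorem not_P_eight {s : Perm α} (hs : s * s = 1) {a b c d e f g h : α}
    (sa : s a = b) (sc : s c = d) (se : s e = f) (sg : s g = h)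
    (hab : a ≠ b) (hcd : c ≠ d) (hef : e ≠ f) (hgh : g ≠ h)
    (hca : c ≠ a) (hcb : c ≠ b)
    (hea : e ≠ a) (heb : e ≠ b) (hec : e ≠ c) (hed : e ≠ d)
    (hga : g ≠ a) (hgb : g ≠ b) (hgc : g ≠ c) (hgd : g ≠ d) (hge : g ≠ e) (hgf : g ≠ f) :
    ¬ P s := by
  have hinv : ∀ x, s (s x) = x := fun x => by
    have := congrArg (fun f : Perm α => f x) hs
    simpa using this
  have sb : s b = a := by rw [← sa, hinv]
  have sd : s d = c := by rw [← sc, hinv]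
  have sf : s f = e := by rw [← se, hinv]
  have sh : s h = g := by rw [← sg, hinv]
  have hda : d ≠ a := fun hh => hcb (by rw [← sd, hh, sa])
  have hdb : d ≠ b := fun hh => hca (by rw [← sd, hh, sb])
  have hfa : f ≠ a := fun hh => heb (by rw [← sf, hh, sa])
  have hfb : f ≠ b := fun hh => hea (by rw [← sf, hh, sb])
  have hfc : f ≠ c := fun hh => hed (by rw [← sf, hh, sc])
  have hfd : f ≠ d := fun hh => hec (by rw [← sf, hh, sd])
  have hha : h ≠ a := fun hh => hgb (by rw [← sh, hh, sa])
  have hhb : h ≠ b := fun hh => hga (by rw [← sh, hh, sb])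
  have hhc : h ≠ c := fun hh => hgd (by rw [← sh, hh, sc])
  have hhd : h ≠ d := fun hh => hgc (by rw [← sh, hh, sd])
  have hhe : h ≠ e := fun hh => hgf (by rw [← sh, hh, se])
  have hhf : h ≠ f := fun hh => hge (by rw [← sh, hh, sf])
  intro hP
  set q : Perm α := swap a b * swap c d * (swap e f * swap g h) with hq
  set q' : Perm α := swap b c * swap d e * (swap f g * swap h a) with hq'
  set r : Perm α := s * q with hr
  have hsq : Commute s q :=
    (((commute_swap_of sa sb).mul_right (commute_swap_of sc sd)).mul_right
      ((commute_swap_of se sf).mul_right (commute_swap_of sg sh)))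
  have hd_ab_cd : Disjoint (swap a b) (swap c d) := disjoint_swap hca hcb hda hdb
  have hd_ef_gh : Disjoint (swap e f) (swap g h) := disjoint_swap hge hgf hhe hhf
  have hd_front_back : Disjoint (swap a b * swap c d) (swap e f * swap g h) :=
    ((disjoint_swap hea heb hfa hfb).mul_right (disjoint_swap hga hgb hha hhb)).mul_left
      ((disjoint_swap hec hed hfc hfd).mul_right (disjoint_swap hgc hgd hhc hhd))
  have hqq : q * q = 1 := by
    rw [hq]
    exact sq_one_mul
      (sq_one_mul swap_sq swap_sq hd_ab_cd.commute)
      (sq_one_mul swap_sq swap_sq hd_ef_gh.commute)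
      hd_front_back.commute
  have hrq : r * q = s := by rw [hr, mul_assoc, hqq, mul_one]
  have hrr : r * r = 1 := sq_one_mul hs hqq hsq
  have hrval : ∀ x, r x = s (swap a b (swap c d (swap e f (swap g h x)))) := fun x => rfl
  have hra : r a = a := by
    rw [hrval, swap_apply_of_ne_of_ne hga.symm hha.symm,
      swap_apply_of_ne_of_ne hea.symm hfa.symm,
      swap_apply_of_ne_of_ne hca.symm hda.symm, swap_apply_left, sb]
  have hrb : r b = b := by
    rw [hrval, swap_apply_of_ne_of_ne hgb.symm hhb.symm,
      swap_apply_of_ne_of_ne heb.symm hfb.symm,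
      swap_apply_of_ne_of_ne hcb.symm hdb.symm, swap_apply_right, sa]
  have hrc : r c = c := by
    rw [hrval, swap_apply_of_ne_of_ne hgc.symm hhc.symm,
      swap_apply_of_ne_of_ne hec.symm hfc.symm, swap_apply_left,
      swap_apply_of_ne_of_ne hda hdb, sd]
  have hrd : r d = d := by
    rw [hrval, swap_apply_of_ne_of_ne hgd.symm hhd.symm,
      swap_apply_of_ne_of_ne hed.symm hfd.symm, swap_apply_right,
      swap_apply_of_ne_of_ne hca hcb, sc]
  have hre : r e = e := by
    rw [hrval, swap_apply_of_ne_of_ne hge.symm hhe.symm, swap_apply_left,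
      swap_apply_of_ne_of_ne hfc hfd, swap_apply_of_ne_of_ne hfa hfb, sf]
  have hrf : r f = f := by
    rw [hrval, swap_apply_of_ne_of_ne hgf.symm hhf.symm, swap_apply_right,
      swap_apply_of_ne_of_ne hec hed, swap_apply_of_ne_of_ne hea heb, se]
  have hrg : r g = g := by
    rw [hrval, swap_apply_left, swap_apply_of_ne_of_ne hhe hhf,
      swap_apply_of_ne_of_ne hhc hhd, swap_apply_of_ne_of_ne hha hhb, sh]
  have hrh : r h = h := by
    rw [hrval, swap_apply_right, swap_apply_of_ne_of_ne hge hgf,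
      swap_apply_of_ne_of_ne hgc hgd, swap_apply_of_ne_of_ne hga hgb, sg]
  have hdisj1 : Disjoint r q := by
    intro x
    by_cases h1 : x = a; · left; rw [h1, hra]
    by_cases h2 : x = b; · left; rw [h2, hrb]
    by_cases h3 : x = c; · left; rw [h3, hrc]
    by_cases h4 : x = d; · left; rw [h4, hrd]
    by_cases h5 : x = e; · left; rw [h5, hre]
    by_cases h6 : x = f; · left; rw [h6, hrf]
    by_cases h7 : x = g; · left; rw [h7, hrg]
    by_cases h8 : x = h; · left; rw [h8, hrh]
    · right
      show swap a b (swap c d (swap e f (swap g h x))) = x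
      rw [swap_apply_of_ne_of_ne h7 h8, swap_apply_of_ne_of_ne h5 h6,
        swap_apply_of_ne_of_ne h3 h4, swap_apply_of_ne_of_ne h1 h2]
  have hdisj2 : Disjoint r q' := by
    intro x
    by_cases h1 : x = a; · left; rw [h1, hra]
    by_cases h2 : x = b; · left; rw [h2, hrb]
    by_cases h3 : x = c; · left; rw [h3, hrc]
    by_cases h4 : x = d; · left; rw [h4, hrd]
    by_cases h5 : x = e; · left; rw [h5, hre]
    by_cases h6 : x = f; · left; rw [h6, hrf]
    by_cases h7 : x = g; · left; rw [h7, hrg]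
    by_cases h8 : x = h; · left; rw [h8, hrh]
    · right
      show swap b c (swap d e (swap f g (swap h a x))) = x
      rw [swap_apply_of_ne_of_ne h8 h1, swap_apply_of_ne_of_ne h6 h7,
        swap_apply_of_ne_of_ne h4 h5, swap_apply_of_ne_of_ne h2 h3]
  have hct_q : q.cycleType = {2, 2, 2, 2} := by
    rw [hq, hd_front_back.cycleType_mul, hd_ab_cd.cycleType_mul, hd_ef_gh.cycleType_mul,
      cycleType_swap' hab, cycleType_swap' hcd, cycleType_swap' hef, cycleType_swap' hgh]
    rfl
  have hct_q' : q'.cycleType = {2, 2, 2, 2} := by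
    have d1 : Disjoint (swap b c) (swap d e) := disjoint_swap hdb (Ne.symm hcd) heb hec
    have d2 : Disjoint (swap f g) (swap h a) := disjoint_swap hhf (Ne.symm hgh) hfa.symm hga.symm
    have d3 : Disjoint (swap b c * swap d e) (swap f g * swap h a) :=
      ((disjoint_swap hfb hfc hgb hgc).mul_right
        (disjoint_swap hhb hhc hab hca.symm)).mul_left
        ((disjoint_swap hfd (Ne.symm hef) hgd hge).mul_right
          (disjoint_swap hhd hhe (Ne.symm hda) (Ne.symm hea)))
    rw [hq', d3.cycleType_mul, d1.cycleType_mul, d2.cycleType_mul,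
      cycleType_swap' (Ne.symm hcb), cycleType_swap' (Ne.symm hed),
      cycleType_swap' (Ne.symm hgf), cycleType_swap' hha]
    rfl
  set u : Perm α := r * q' with hu
  have hconj : IsConj s u := by
    rw [isConj_iff_cycleType_eq, ← hrq, hdisj1.cycleType_mul, hu, hdisj2.cycleType_mul, hct_q, hct_q']
  have hqr : Commute q r := hdisj1.commute.symm
  have hsu : s * u = q * q' := by
    rw [← hrq, hu]
    calc r * q * (r * q') = r * (q * r) * q' := by group
      _ = r * (r * q) * q' := by rw [hqr.eq]
      _ = r * r * (q * q') := by group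
      _ = q * q' := by rw [hrr, one_mul]
  have hv6 := hP.2 u hconj
  rw [hsu] at hv6
  set v : Perm α := q * q' with hv
  have hvval : ∀ x, v x =
      swap a b (swap c d (swap e f (swap g h
        (swap b c (swap d e (swap f g (swap h a x))))))) := fun x => rfl
  have hva : v a = g := by
    simp [hvval, swap_apply_def, hab, hab.symm, hcd, hcd.symm, hef, hef.symm, hgh, hgh.symm,
      hca, hca.symm, hcb, hcb.symm, hda, hda.symm, hdb, hdb.symm, hea, hea.symm, heb, heb.symm,
      hec, hec.symm, hed, hed.symm, hfa, hfa.symm, hfb, hfb.symm, hfc, hfc.symm, hfd, hfd.symm,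
      hga, hga.symm, hgb, hgb.symm, hgc, hgc.symm, hgd, hgd.symm, hge, hge.symm, hgf, hgf.symm,
      hha, hha.symm, hhb, hhb.symm, hhc, hhc.symm, hhd, hhd.symm, hhe, hhe.symm, hhf, hhf.symm]
  have hvg : v g = e := by
    simp [hvval, swap_apply_def, hab, hab.symm, hcd, hcd.symm, hef, hef.symm, hgh, hgh.symm,
      hca, hca.symm, hcb, hcb.symm, hda, hda.symm, hdb, hdb.symm, hea, hea.symm, heb, heb.symm,
      hec, hec.symm, hed, hed.symm, hfa, hfa.symm, hfb, hfb.symm, hfc, hfc.symm, hfd, hfd.symm,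
      hga, hga.symm, hgb, hgb.symm, hgc, hgc.symm, hgd, hgd.symm, hge, hge.symm, hgf, hgf.symm,
      hha, hha.symm, hhb, hhb.symm, hhc, hhc.symm, hhd, hhd.symm, hhe, hhe.symm, hhf, hhf.symm]
  have hve : v e = c := by
    simp [hvval, swap_apply_def, hab, hab.symm, hcd, hcd.symm, hef, hef.symm, hgh, hgh.symm,
      hca, hca.symm, hcb, hcb.symm, hda, hda.symm, hdb, hdb.symm, hea, hea.symm, heb, heb.symm,
      hec, hec.symm, hed, hed.symm, hfa, hfa.symm, hfb, hfb.symm, hfc, hfc.symm, hfd, hfd.symm,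
      hga, hga.symm, hgb, hgb.symm, hgc, hgc.symm, hgd, hgd.symm, hge, hge.symm, hgf, hgf.symm,
      hha, hha.symm, hhb, hhb.symm, hhc, hhc.symm, hhd, hhd.symm, hhe, hhe.symm, hhf, hhf.symm]
  have hvc : v c = a := by
    simp [hvval, swap_apply_def, hab, hab.symm, hcd, hcd.symm, hef, hef.symm, hgh, hgh.symm,
      hca, hca.symm, hcb, hcb.symm, hda, hda.symm, hdb, hdb.symm, hea, hea.symm, heb, heb.symm,
      hec, hec.symm, hed, hed.symm, hfa, hfa.symm, hfb, hfb.symm, hfc, hfc.symm, hfd, hfd.symm,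
      hga, hga.symm, hgb, hgb.symm, hgc, hgc.symm, hgd, hgd.symm, hge, hge.symm, hgf, hgf.symm,
      hha, hha.symm, hhb, hhb.symm, hhc, hhc.symm, hhd, hhd.symm, hhe, hhe.symm, hhf, hhf.symm]
  have hfin : (v ^ 6) a = e := by
    have h6 : v ^ 6 = v * v * v * v * v * v := by
      rw [show (6:ℕ) = 5+1 from rfl, pow_succ, show (5:ℕ) = 4+1 from rfl, pow_succ,
        show (4:ℕ) = 3+1 from rfl, pow_succ, show (3:ℕ) = 2+1 from rfl, pow_succ, pow_two]
    rw [h6]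
    simp only [Perm.mul_apply, hva, hvg, hve, hvc]
  rw [hv6] at hfin
  simp only [Perm.one_apply] at hfin
  exact hea hfin.symm

/-- Two fixed-point-free involutions on a 4-element type commute. -/
theorem commute_of_fpf_inv4 (hcard : Fintype.card α = 4) {s u : Perm α}
    (hs : s * s = 1) (hu : u * u = 1)
    (hsf : ∀ x, s x ≠ x) (huf : ∀ x, u x ≠ x) : Commute s u := by
  have hsinv : ∀ x, s (s x) = x := fun x => by
    have := congrArg (fun f : Perm α => f x) hs; simpa using this
  have huinv : ∀ x, u (u x) = x := fun x => by
    have := congrArg (fun f : Perm α => f x) hu; simpa using this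
  ext x
  simp only [Perm.coe_mul, Function.comp_apply]
  by_cases hux : u x = s x
  · rw [hux, hsinv, ← hux, huinv]
  · have hyx : u (s x) ≠ x := by
      intro hh
      have h2 := congrArg u hh
      rw [huinv] at h2
      exact hux h2.symm
    have hysx : u (s x) ≠ s x := huf (s x)
    have hyux : u (s x) ≠ u x := fun hh => hsf x (u.injective hh)
    have hzx : s (u x) ≠ x := by
      intro hh
      have h2 := congrArg s hh
      rw [hsinv] at h2
      exact hux h2
    have hzsx : s (u x) ≠ s x := fun hh => huf x (s.injective hh)
    have hzux : s (u x) ≠ u x := hsf (u x)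
    have htcard : ({x, s x, u x} : Finset α).card = 3 := by
      rw [Finset.card_insert_of_notMem (by simp [Ne.symm (hsf x), Ne.symm (huf x)]),
        Finset.card_insert_of_notMem (by simp only [Finset.mem_singleton]; exact fun hh => hux hh.symm), Finset.card_singleton]
    have hcompl : ({x, s x, u x} : Finset α)ᶜ.card = 1 := by
      rw [Finset.card_compl, htcard, hcard]
    have hymem : u (s x) ∈ ({x, s x, u x} : Finset α)ᶜ := by
      simp [Finset.mem_compl, hyx, hysx, hyux]
    have hzmem : s (u x) ∈ ({x, s x, u x} : Finset α)ᶜ := by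
      simp [Finset.mem_compl, hzx, hzsx, hzux]
    exact Finset.card_le_one.mp (le_of_eq hcompl) _ hzmem _ hymem

/-- For `3 ≤ card α ≠ 6`, an involution satisfying `P` must be a transposition. -/
theorem isSwap_of_P (hcard : 3 ≤ Fintype.card α) (h6 : Fintype.card α ≠ 6) {s : Perm α}
    (hs : s * s = 1) (h1 : s ≠ 1) (hP : P s) : IsSwap s := by
  have hsinv : ∀ x, s (s x) = x := fun x => by
    have := congrArg (fun f : Perm α => f x) hs; simpa using this
  by_contra hsw
  -- find the first transposed pair
  have ha : ∃ a, s a ≠ a := by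
    by_contra hh
    push_neg at hh
    exact h1 (Equiv.ext fun x => hh x)
  obtain ⟨a, ha⟩ := ha
  have sa : s a = s a := rfl
  have hab : a ≠ s a := Ne.symm ha
  -- find a second transposed pair
  have hc : ∃ c, c ≠ a ∧ c ≠ s a ∧ s c ≠ c := by
    by_contra hh
    push_neg at hh
    apply hsw
    refine ⟨a, s a, hab, ?_⟩
    ext x
    by_cases h1x : x = a
    · rw [h1x, swap_apply_left]
    by_cases h2x : x = s a
    · rw [h2x, swap_apply_right, hsinv]
    · rw [swap_apply_of_ne_of_ne h1x h2x, hh x h1x h2x]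
  obtain ⟨c, hca, hcb, hcm⟩ := hc
  have hcd : c ≠ s c := Ne.symm hcm
  by_cases hfix : ∃ e, s e = e
  · obtain ⟨e, he⟩ := hfix
    exact absurd hP (not_P_five hs rfl rfl he hab hcd hca hcb)
  · push_neg at hfix
    by_cases he : ∃ e, e ≠ a ∧ e ≠ s a ∧ e ≠ c ∧ e ≠ s c
    · obtain ⟨e, hea, heb, hec, hed⟩ := he
      have hef : e ≠ s e := Ne.symm (hfix e)
      by_cases hg : ∃ g, g ≠ a ∧ g ≠ s a ∧ g ≠ c ∧ g ≠ s c ∧ g ≠ e ∧ g ≠ s e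
      · obtain ⟨g, hga, hgb, hgc, hgd, hge, hgf⟩ := hg
        exact absurd hP
          (not_P_eight hs rfl rfl rfl rfl hab hcd hef (Ne.symm (hfix g))
            hca hcb hea heb hec hed hga hgb hgc hgd hge hgf)
      · -- now `card α = 6`
        push_neg at hg
        have hfa : s e ≠ a := fun hh => heb (by rw [← hsinv e, hh])
        have hfb : s e ≠ s a := fun hh => hea (s.injective hh)
        have hfc : s e ≠ c := fun hh => hed (by rw [← hsinv e, hh])
        have hfd : s e ≠ s c := fun hh => hec (s.injective hh)
        have hda : s c ≠ a := fun hh => hcb (by rw [← hsinv c, hh])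
        have hdb : s c ≠ s a := fun hh => hca (s.injective hh)
        apply h6
        have hsub : (Finset.univ : Finset α) ⊆ {a, s a, c, s c, e, s e} := by
          intro x _
          by_cases h1x : x = a; · simp [h1x]
          by_cases h2x : x = s a; · simp [h2x]
          by_cases h3x : x = c; · simp [h3x]
          by_cases h4x : x = s c; · simp [h4x]
          by_cases h5x : x = e; · simp [h5x]
          · simp [hg x h1x h2x h3x h4x h5x]
        have hsup : ({a, s a, c, s c, e, s e} : Finset α) ⊆ Finset.univ := Finset.subset_univ _
        have : ({a, s a, c, s c, e, s e} : Finset α) = Finset.univ :=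
          Finset.Subset.antisymm hsup hsub
        rw [← Finset.card_univ, ← this]
        rw [Finset.card_insert_of_notMem (by
            simp [hab, hca.symm, hda.symm, hea.symm, hfa.symm]),
          Finset.card_insert_of_notMem (by
            simp [hcb.symm, hdb.symm, heb.symm, hfb.symm]),
          Finset.card_insert_of_notMem (by simp [hcd, hec.symm, hfc.symm]),
          Finset.card_insert_of_notMem (by simp [hed.symm, hfd.symm]),
          Finset.card_insert_of_notMem (by simp [Ne.symm (hfix e)]),
          Finset.card_singleton]
    · -- now `card α = 4` : use the Klein-four argument
      push_neg at he
      have hda : s c ≠ a := fun hh => hcb (by rw [← hsinv c, hh])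
      have hdb : s c ≠ s a := fun hh => hca (s.injective hh)
      have hcard4 : Fintype.card α = 4 := by
        have hsub : (Finset.univ : Finset α) ⊆ {a, s a, c, s c} := by
          intro x _
          by_cases h1x : x = a; · simp [h1x]
          by_cases h2x : x = s a; · simp [h2x]
          by_cases h3x : x = c; · simp [h3x]
          · simp [he x h1x h2x h3x]
        have : ({a, s a, c, s c} : Finset α) = Finset.univ :=
          Finset.Subset.antisymm (Finset.subset_univ _) hsub
        rw [← Finset.card_univ, ← this]
        rw [Finset.card_insert_of_notMem (by simp [hab, hca.symm, hda.symm]),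
          Finset.card_insert_of_notMem (by simp [hcb.symm, hdb.symm]),
          Finset.card_insert_of_notMem (by simp [hcd]), Finset.card_singleton]
      obtain ⟨u, hconj, hne1, h3⟩ := hP.1
      obtain ⟨g, rfl⟩ := isConj_iff.mp hconj
      have hu : (g * s * g⁻¹) * (g * s * g⁻¹) = 1 := by
        rw [show g * s * g⁻¹ * (g * s * g⁻¹) = g * (s * s) * g⁻¹ by group, hs]
        simp
      have huf : ∀ x, (g * s * g⁻¹) x ≠ x := by
        intro x hh
        simp only [Perm.coe_mul, Function.comp_apply] at hh
        have := congrArg (fun y => g⁻¹ y) hh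
        simp only [Perm.inv_def, Equiv.symm_apply_apply] at this
        exact hfix (g⁻¹ x) this
      have hcomm := commute_of_fpf_inv4 hcard4 hs hu hfix huf
      have h2 : (s * (g * s * g⁻¹)) * (s * (g * s * g⁻¹)) = 1 := sq_one_mul hs hu hcomm
      rw [show (3:ℕ) = 2+1 from rfl, pow_succ, pow_two, h2, one_mul] at h3
      exact hne1 h3

theorem P_map (φ : Perm α ≃* Perm α) {s : Perm α} (h : P s) : P (φ s) := by
  constructor
  · obtain ⟨u, hconj, hne, h3⟩ := h.1
    refine ⟨φ u, ?_, ?_, ?_⟩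
    · obtain ⟨g, rfl⟩ := isConj_iff.mp hconj
      exact isConj_iff.mpr ⟨φ g, by rw [← map_inv, ← map_mul, ← map_mul]⟩
    · rw [← map_mul]
      intro hh
      exact hne (by rwa [← map_one φ, (EmbeddingLike.apply_eq_iff_eq φ)] at hh)
    · rw [← map_mul, ← map_pow, h3, map_one]
  · intro u' hconj'
    have hconj : IsConj s (φ.symm u') := by
      obtain ⟨g, hg⟩ := isConj_iff.mp hconj'
      refine isConj_iff.mpr ⟨φ.symm g, ?_⟩
      have := congrArg (fun y => φ.symm y) hg
      simpa [map_mul, map_inv] using this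
    have h6 := h.2 _ hconj
    have := congrArg (fun y => φ y) h6
    simpa [map_mul, map_pow] using this

theorem isSwap_map (hcard : 3 ≤ Fintype.card α) (h6 : Fintype.card α ≠ 6)
    (φ : Perm α ≃* Perm α) {s : Perm α} (hs : IsSwap s) : IsSwap (φ s) := by
  obtain ⟨a, b, hab, rfl⟩ := hs
  apply isSwap_of_P hcard h6
  · rw [← map_mul, swap_sq, map_one]
  · intro hh
    rw [← map_one φ, (EmbeddingLike.apply_eq_iff_eq φ)] at hh
    have := congrArg (fun f : Perm α => f a) hh
    simp only [Perm.one_apply, swap_apply_left] at this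
    exact hab this.symm
  · exact P_map φ (P_of_isSwap hcard ⟨a, b, hab, rfl⟩)

theorem shared_point {p q : Perm α} (hp : IsSwap p) (hq : IsSwap q) (h : p * q ≠ q * p) :
    ∃ x y z, x ≠ y ∧ x ≠ z ∧ y ≠ z ∧ p = swap x y ∧ q = swap x z := by
  obtain ⟨a, b, hab, rfl⟩ := hp
  obtain ⟨c, d, hcd, rfl⟩ := hq
  by_cases hca : c = a
  · refine ⟨a, b, d, hab, hca ▸ hcd, ?_, rfl, by rw [hca]⟩
    intro hbd
    exact h (by rw [hca, ← hbd])
  by_cases hcb : c = b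
  · refine ⟨b, a, d, Ne.symm hab, hcb ▸ hcd, ?_, swap_comm a b, by rw [hcb]⟩
    intro had
    exact h (by rw [hcb, ← had, swap_comm a b])
  by_cases hda : d = a
  · refine ⟨a, b, c, hab, Ne.symm hca, Ne.symm hcb, rfl, by rw [swap_comm c d, hda]⟩
  by_cases hdb : d = b
  · refine ⟨b, a, c, Ne.symm hab, Ne.symm hcb, Ne.symm hca, swap_comm a b,
      by rw [swap_comm c d, hdb]⟩
  · exact absurd (disjoint_swap hca hcb hda hdb).commute h

theorem isSwap_fixed_rep {u : Perm α} (hu : IsSwap u) {a : α} (ha : u a ≠ a) :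
    u = swap a (u a) := by
  obtain ⟨x, y, hxy, rfl⟩ := hu
  by_cases hax : a = x
  · rw [hax, swap_apply_left]
  by_cases hay : a = y
  · rw [hay, swap_apply_right, swap_comm]
  · exact absurd (swap_apply_of_ne_of_ne hax hay) ha

theorem conj_injective (hcard : 3 ≤ Fintype.card α) :
    Function.Injective (MulAut.conj : Perm α →* MulAut (Perm α)) := by
  have key : ∀ σ : Perm α, (MulAut.conj : Perm α →* MulAut (Perm α)) σ = 1 → σ = 1 := by
    intro σ hσ
    ext x
    by_contra hx
    simp only [Perm.one_apply] at hx
    have hy : ∃ y, y ≠ x ∧ y ≠ σ x := by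
      by_contra hh
      push_neg at hh
      have hsub : (Finset.univ : Finset α) ⊆ {x, σ x} := by
        intro z _
        rcases eq_or_ne z x with h | h
        · simp [h]
        · simp [hh z h]
      have h1 := Finset.card_le_card hsub
      simp only [Finset.card_univ] at h1
      have h2 : ({x, σ x} : Finset α).card ≤ 2 :=
        (Finset.card_insert_le _ _).trans (by simp)
      omega
    obtain ⟨y, hyx, hysx⟩ := hy
    have h1 := congrArg (fun ψ : MulAut (Perm α) => (ψ (swap x y)) (σ x)) hσ
    simp only [MulAut.conj_apply, Perm.coe_mul, Function.comp_apply, MulAut.one_apply,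
      Perm.inv_def, Equiv.symm_apply_apply] at h1
    rw [swap_apply_left, swap_apply_of_ne_of_ne hx (fun hh => hysx hh.symm)] at h1
    exact hyx (σ.injective h1)
  intro σ τ hστ
  have : (MulAut.conj : Perm α →* MulAut (Perm α)) (σ * τ⁻¹) = 1 := by
    rw [map_mul, map_inv, hστ, mul_inv_cancel]
  have := key _ this
  rw [mul_inv_eq_one] at this
  exact this

theorem exists_conj {n : ℕ} (hn : 3 ≤ n) (hn6 : n ≠ 6) (φ : Perm (Fin n) ≃* Perm (Fin n)) :
    ∃ σ : Perm (Fin n), ∀ x, φ x = σ * x * σ⁻¹ := by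
  haveI : NeZero n := ⟨by omega⟩
  have hcard : 3 ≤ Fintype.card (Fin n) := by rw [Fintype.card_fin]; exact hn
  have hcard6 : Fintype.card (Fin n) ≠ 6 := by rw [Fintype.card_fin]; exact hn6
  set t : Fin n → Perm (Fin n) := fun i => φ (swap 0 i) with ht
  have hswap : ∀ i : Fin n, i ≠ 0 → IsSwap (t i) := fun i hi =>
    isSwap_map hcard hcard6 φ ⟨0, i, Ne.symm hi, rfl⟩
  -- the generators pairwise fail to commute
  have hnc : ∀ i j : Fin n, i ≠ 0 → j ≠ 0 → i ≠ j → t i * t j ≠ t j * t i := by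
    intro i j hi hj hij hh
    rw [← map_mul, ← map_mul, EmbeddingLike.apply_eq_iff_eq] at hh
    have := congrArg (fun f : Perm (Fin n) => f 0) hh
    simp only [Perm.coe_mul, Function.comp_apply] at this
    rw [swap_apply_left, swap_apply_of_ne_of_ne hj (fun hc => hij hc.symm),
      swap_apply_left, swap_apply_of_ne_of_ne hi hij] at this
    exact hij this.symm
  set i1 : Fin n := ⟨1, by omega⟩ with hi1
  set i2 : Fin n := ⟨2, by omega⟩ with hi2
  have h10 : i1 ≠ 0 := by simp [hi1, Fin.ext_iff]
  have h20 : i2 ≠ 0 := by simp [hi2, Fin.ext_iff]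
  have h12 : i1 ≠ i2 := by simp [hi1, hi2, Fin.ext_iff]
  obtain ⟨a, b1, b2, hab1, hab2, hb12, hrep1, hrep2⟩ :=
    shared_point (hswap i1 h10) (hswap i2 h20) (hnc i1 i2 h10 h20 h12)
  -- every generator moves `a`
  have hmove : ∀ i : Fin n, i ≠ 0 → t i a ≠ a := by
    intro i hi hfixa
    by_cases hi1' : i = i1; · rw [hi1', hrep1, swap_apply_left] at hfixa; exact hab1 hfixa.symm
    by_cases hi2' : i = i2; · rw [hi2', hrep2, swap_apply_left] at hfixa; exact hab2 hfixa.symm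
    obtain ⟨x, y, hxy, hrep⟩ := hswap i hi
    rw [hrep] at hfixa
    have hax : a ≠ x := by
      intro hh
      rw [← hh] at hfixa hxy
      rw [swap_apply_left] at hfixa
      exact hxy hfixa.symm
    have hay : a ≠ y := by
      intro hh
      rw [← hh] at hfixa hxy
      rw [swap_apply_right] at hfixa
      exact hxy hfixa
    have hb1 : b1 = x ∨ b1 = y := by
      by_contra hh
      push_neg at hh
      exact hnc i i1 hi h10 hi1'
        (by rw [hrep, hrep1]; exact (disjoint_swap hax hay hh.1 hh.2).commute.eq)
    have hb2 : b2 = x ∨ b2 = y := by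
      by_contra hh
      push_neg at hh
      exact hnc i i2 hi h20 hi2'
        (by rw [hrep, hrep2]; exact (disjoint_swap hax hay hh.1 hh.2).commute.eq)
    have hrepi : t i = swap b1 b2 := by
      rcases hb1 with h1 | h1 <;> rcases hb2 with h2 | h2
      · exact absurd (h1.trans h2.symm) hb12
      · rw [hrep, h1, h2]
      · rw [hrep, h1, h2, swap_comm]
      · exact absurd (h1.trans h2.symm) hb12
    -- the product of the three images is an involution, its preimage is a 4-cycle
    have hwa : (t i1 * t i2 * t i) a = b2 := by
      rw [hrep1, hrep2, hrepi]
      simp only [Perm.mul_apply]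
      rw [swap_apply_of_ne_of_ne hab1 hab2, swap_apply_left,
        swap_apply_of_ne_of_ne (Ne.symm hab2) (Ne.symm hb12)]
    have hwb2 : (t i1 * t i2 * t i) b2 = a := by
      rw [hrep1, hrep2, hrepi]
      simp only [Perm.mul_apply]
      rw [swap_apply_right, swap_apply_of_ne_of_ne (Ne.symm hab1) hb12, swap_apply_right]
    have hwb1 : (t i1 * t i2 * t i) b1 = b1 := by
      rw [hrep1, hrep2, hrepi]
      simp only [Perm.mul_apply]
      rw [swap_apply_left, swap_apply_right, swap_apply_left]
    have hw2 : (t i1 * t i2 * t i) * (t i1 * t i2 * t i) = 1 := by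
      ext z
      simp only [Perm.mul_apply, Perm.one_apply]
      rw [hrep1, hrep2, hrepi]
      by_cases hz1 : z = a
      · rw [hz1]
        have h1 : swap a b1 ((swap a b2) ((swap b1 b2) a)) = b2 := by
          rw [swap_apply_of_ne_of_ne hab1 hab2, swap_apply_left,
            swap_apply_of_ne_of_ne (Ne.symm hab2) (Ne.symm hb12)]
        rw [h1, swap_apply_right, swap_apply_of_ne_of_ne (Ne.symm hab1) hb12,
          swap_apply_right]
      by_cases hz2 : z = b1
      · rw [hz2]
        have h1 : swap a b1 ((swap a b2) ((swap b1 b2) b1)) = b1 := by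
          rw [swap_apply_left, swap_apply_right, swap_apply_left]
        rw [h1, h1]
      by_cases hz3 : z = b2
      · rw [hz3]
        have h1 : swap a b1 ((swap a b2) ((swap b1 b2) b2)) = a := by
          rw [swap_apply_right, swap_apply_of_ne_of_ne (Ne.symm hab1) hb12, swap_apply_right]
        rw [h1, swap_apply_of_ne_of_ne hab1 hab2, swap_apply_left,
          swap_apply_of_ne_of_ne (Ne.symm hab2) (Ne.symm hb12)]
      · have h1 : swap a b1 ((swap a b2) ((swap b1 b2) z)) = z := by
          rw [swap_apply_of_ne_of_ne hz2 hz3, swap_apply_of_ne_of_ne hz1 hz3,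
            swap_apply_of_ne_of_ne hz1 hz2]
        rw [h1, h1]
    have hzz : (swap (0 : Fin n) i1 * swap 0 i2 * swap 0 i) *
        (swap 0 i1 * swap 0 i2 * swap 0 i) = 1 := by
      apply φ.injective
      rw [map_one, map_mul, map_mul, map_mul]
      exact hw2
    have hzz0 := congrArg (fun f : Perm (Fin n) => f 0) hzz
    simp only [Perm.mul_apply, Perm.one_apply] at hzz0
    rw [swap_apply_left, swap_apply_of_ne_of_ne hi hi2', swap_apply_of_ne_of_ne hi hi1',
      swap_apply_right, swap_apply_left,
      swap_apply_of_ne_of_ne h20 (fun hh => h12 hh.symm)] at hzz0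
    exact h20 hzz0
  -- representation of every generator through the common point
  have hrepall : ∀ i : Fin n, i ≠ 0 → t i = swap a (t i a) := fun i hi =>
    isSwap_fixed_rep (hswap i hi) (hmove i hi)
  -- build the conjugating permutation
  set f : Fin n → Fin n := fun i => if i = 0 then a else t i a with hf
  have hf0 : f 0 = a := by rw [hf]; simp
  have hfi : ∀ i : Fin n, i ≠ 0 → f i = t i a := fun i hi => by rw [hf]; simp [hi]
  have hinj : Function.Injective f := by
    intro i j hij
    by_cases hi : i = 0 <;> by_cases hj : j = 0
    · rw [hi, hj]
    · rw [hi, hf0, hfi j hj] at hij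
      exact absurd hij.symm (hmove j hj)
    · rw [hj, hf0, hfi i hi] at hij
      exact absurd hij (hmove i hi)
    · rw [hfi i hi, hfi j hj] at hij
      have hti : t i = t j := by rw [hrepall i hi, hrepall j hj, hij]
      have hsw : swap (0 : Fin n) i = swap 0 j := φ.injective hti
      have := congrArg (fun f : Perm (Fin n) => f 0) hsw
      simpa using this
  set σ : Perm (Fin n) := Equiv.ofBijective f (Finite.injective_iff_bijective.mp hinj) with hσ
  have hσval : ∀ i, σ i = f i := fun i => rfl
  refine ⟨σ, ?_⟩
  have hkey : ∀ p : Perm (Fin n), p.IsSwap → φ p = σ * p * σ⁻¹ := by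
    rintro p ⟨x, y, hxy, rfl⟩
    rw [← Equiv.swap_apply_apply, hσval, hσval]
    by_cases hx : x = 0
    · have hy : y ≠ 0 := fun hh => hxy (hx.trans hh.symm)
      rw [hx, hf0, hfi y hy]
      exact hrepall y hy
    by_cases hy : y = 0
    · rw [hy, hf0, swap_comm x 0, swap_comm (f x) a, hfi x hx]
      exact hrepall x hx
    · have htne : t y a ≠ t x a := by
        intro hh
        have : t y = t x := by rw [hrepall x hx, hrepall y hy, hh]
        have hsw : swap (0 : Fin n) y = swap 0 x := φ.injective this
        have := congrArg (fun f : Perm (Fin n) => f 0) hsw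
        simp only [swap_apply_left] at this
        exact hxy this.symm
      have hxy0 : swap x y = swap 0 x * swap 0 y * (swap 0 x)⁻¹ := by
        rw [← Equiv.swap_apply_apply, swap_apply_left,
          swap_apply_of_ne_of_ne hy (fun hh => hxy hh.symm)]
      rw [hxy0, map_mul, map_mul, map_inv]
      have h1 : φ (swap 0 x) = swap a (t x a) := hrepall x hx
      have h2 : φ (swap 0 y) = swap a (t y a) := hrepall y hy
      rw [h1, h2, ← Equiv.swap_apply_apply, swap_apply_left,
        swap_apply_of_ne_of_ne (hmove y hy) htne, hfi x hx, hfi y hy]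
  intro x
  have hx : x ∈ Subgroup.closure {p : Perm (Fin n) | p.IsSwap} := by
    rw [Equiv.Perm.closure_isSwap]; trivial
  refine Subgroup.closure_induction (p := fun g _ => φ g = σ * g * σ⁻¹)
    (fun p hp => hkey p hp) (by simp) ?_ ?_ hx
  · intro p q _ _ hp hq
    rw [map_mul, hp, hq]
    group
  · intro p _ hp
    rw [map_inv, hp]
    group
theorem conj_bijective {n : ℕ} (hn : 3 ≤ n) (hn6 : n ≠ 6) :
    Function.Bijective (MulAut.conj : Perm (Fin n) →* MulAut (Perm (Fin n))) := by
  constructor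
  · exact conj_injective (by rw [Fintype.card_fin]; exact hn)
  · intro ψ
    obtain ⟨σ, hσ⟩ := exists_conj hn hn6 ψ
    refine ⟨σ, ?_⟩
    apply MulEquiv.ext
    intro x
    rw [MulAut.conj_apply]
    exact (hσ x).symm

/-- `Aut(S_n) ≃ S_n` for `3 ≤ n ≠ 6`. -/
noncomputable def autPermEquiv {n : ℕ} (hn : 3 ≤ n) (hn6 : n ≠ 6) :
    MulAut (Perm (Fin n)) ≃* Perm (Fin n) :=
  (MulEquiv.ofBijective (MulAut.conj : Perm (Fin n) →* MulAut (Perm (Fin n)))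
    (conj_bijective hn hn6)).symm

/-- Isomorphic groups have isomorphic automorphism groups. -/
def mulAutCongr {G : Type*} {H : Type*} [Group G] [Group H] (e : G ≃* H) :
    MulAut G ≃* MulAut H where
  toFun φ := (e.symm.trans φ).trans e
  invFun ψ := (e.trans ψ).trans e.symm
  left_inv φ := by ext x; simp
  right_inv ψ := by ext x; simp
  map_mul' φ ψ := by ext x; simp [MulAut.mul_apply]

end AutSn


open CategoryTheory

/-- The `k`-fold iterated automorphism group, as a bundled group. -/
def iterAut (G : GrpCat) : ℕ → GrpCat
  | 0 => G
  | k + 1 => GrpCat.of (MulAut (iterAut G k))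

theorem symm_group_aut_stabilizes (n : ℕ) (hn : 3 ≤ n) (hn6 : n ≠ 6) :
    (∀ (G : Type) [Group G], Nonempty (G ≃* Equiv.Perm (Fin n)) →
      Nonempty (MulAut G ≃* Equiv.Perm (Fin n))) ∧
    (∀ k : ℕ, Nonempty ((iterAut (GrpCat.of (Equiv.Perm (Fin n))) k) ≃* Equiv.Perm (Fin n))) := by
  have part1 : ∀ (G : Type) [Group G], Nonempty (G ≃* Equiv.Perm (Fin n)) →
      Nonempty (MulAut G ≃* Equiv.Perm (Fin n)) := by
    intro G _ ⟨e⟩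
    exact ⟨(AutSn.mulAutCongr e).trans (AutSn.autPermEquiv hn hn6)⟩
  refine ⟨part1, ?_⟩
  intro k
  induction k with
  | zero => exact ⟨MulEquiv.refl _⟩
  | succ k ih =>
    obtain ⟨e⟩ := ih
    exact ⟨(AutSn.mulAutCongr e).trans (AutSn.autPermEquiv hn hn6)⟩
end

section
/- The symmetric group S_6 has an outer automorphism: there exists a group automorphism φ of Equiv.Perm (Fin 6) that is not inner, i.e. there is no permutation g of Fin 6 such that φ σ = g σ g⁻¹ for all σ. -/
namespace S6Outer

abbrev G := Equiv.Perm (Fin 6)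

/-- A self-inverse function as an element of `Perm (Fin 6)`. -/
def mkP (v : Fin 6 → Fin 6) (h : ∀ x, v (v x) = x := by decide) : G := ⟨v, v, h, h⟩

def s (a b : Fin 6) : G := Equiv.swap a b

/-- The six synthematic totals (1-factorizations of K₆), each given as a set
of five fixed-point-free involutions. -/
def t : Fin 6 → Finset G := ![
    {s 0 1 * s 2 3 * s 4 5, s 0 2 * s 1 4 * s 3 5, s 0 3 * s 1 5 * s 2 4, s 0 4 * s 1 3 * s 2 5, s 0 5 * s 1 2 * s 3 4},
    {s 0 1 * s 2 3 * s 4 5, s 0 2 * s 1 5 * s 3 4, s 0 3 * s 1 4 * s 2 5, s 0 4 * s 1 2 * s 3 5, s 0 5 * s 1 3 * s 2 4},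
    {s 0 1 * s 2 4 * s 3 5, s 0 2 * s 1 3 * s 4 5, s 0 3 * s 1 4 * s 2 5, s 0 4 * s 1 5 * s 2 3, s 0 5 * s 1 2 * s 3 4},
    {s 0 1 * s 2 4 * s 3 5, s 0 2 * s 1 5 * s 3 4, s 0 3 * s 1 2 * s 4 5, s 0 4 * s 1 3 * s 2 5, s 0 5 * s 1 4 * s 2 3},
    {s 0 1 * s 2 5 * s 3 4, s 0 2 * s 1 3 * s 4 5, s 0 3 * s 1 5 * s 2 4, s 0 4 * s 1 2 * s 3 5, s 0 5 * s 1 4 * s 2 3},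
    {s 0 1 * s 2 5 * s 3 4, s 0 2 * s 1 4 * s 3 5, s 0 3 * s 1 2 * s 4 5, s 0 4 * s 1 5 * s 2 3, s 0 5 * s 1 3 * s 2 4}]

/-- Conjugation action on finsets of permutations. -/
def conjF (g : G) (S : Finset G) : Finset G := S.image fun σ => g * σ * g⁻¹

/-- The permutation of the six totals induced by conjugation by `swap a b`. -/
def B : Fin 6 → Fin 6 → G := ![
  ![mkP ![0,1,2,3,4,5], mkP ![1,0,3,2,5,4], mkP ![5,3,4,1,2,0], mkP ![4,2,1,5,0,3], mkP ![3,4,5,0,1,2], mkP ![2,5,0,4,3,1]],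
  ![mkP ![1,0,3,2,5,4], mkP ![0,1,2,3,4,5], mkP ![2,4,0,5,1,3], mkP ![3,5,4,0,2,1], mkP ![5,2,1,4,3,0], mkP ![4,3,5,1,0,2]],
  ![mkP ![5,3,4,1,2,0], mkP ![2,4,0,5,1,3], mkP ![0,1,2,3,4,5], mkP ![1,0,5,4,3,2], mkP ![4,5,3,2,0,1], mkP ![3,2,1,0,5,4]],
  ![mkP ![4,2,1,5,0,3], mkP ![3,5,4,0,2,1], mkP ![1,0,5,4,3,2], mkP ![0,1,2,3,4,5], mkP ![2,3,0,1,5,4], mkP ![5,4,3,2,1,0]],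
  ![mkP ![3,4,5,0,1,2], mkP ![5,2,1,4,3,0], mkP ![4,5,3,2,0,1], mkP ![2,3,0,1,5,4], mkP ![0,1,2,3,4,5], mkP ![1,0,4,5,2,3]],
  ![mkP ![2,5,0,4,3,1], mkP ![4,3,5,1,0,2], mkP ![3,2,1,0,5,4], mkP ![5,4,3,2,1,0], mkP ![1,0,4,5,2,3], mkP ![0,1,2,3,4,5]]]

/-- Preimages of the transpositions under the outer automorphism. -/
def C : Fin 6 → Fin 6 → G := ![
  ![mkP ![0,1,2,3,4,5], mkP ![1,0,3,2,5,4], mkP ![5,2,1,4,3,0], mkP ![4,3,5,1,0,2], mkP ![3,5,4,0,2,1], mkP ![2,4,0,5,1,3]],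
  ![mkP ![1,0,3,2,5,4], mkP ![0,1,2,3,4,5], mkP ![3,4,5,0,1,2], mkP ![2,5,0,4,3,1], mkP ![4,2,1,5,0,3], mkP ![5,3,4,1,2,0]],
  ![mkP ![5,2,1,4,3,0], mkP ![3,4,5,0,1,2], mkP ![0,1,2,3,4,5], mkP ![1,0,4,5,2,3], mkP ![2,3,0,1,5,4], mkP ![4,5,3,2,0,1]],
  ![mkP ![4,3,5,1,0,2], mkP ![2,5,0,4,3,1], mkP ![1,0,4,5,2,3], mkP ![0,1,2,3,4,5], mkP ![5,4,3,2,1,0], mkP ![3,2,1,0,5,4]],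
  ![mkP ![3,5,4,0,2,1], mkP ![4,2,1,5,0,3], mkP ![2,3,0,1,5,4], mkP ![5,4,3,2,1,0], mkP ![0,1,2,3,4,5], mkP ![1,0,5,4,3,2]],
  ![mkP ![2,4,0,5,1,3], mkP ![5,3,4,1,2,0], mkP ![4,5,3,2,0,1], mkP ![3,2,1,0,5,4], mkP ![1,0,5,4,3,2], mkP ![0,1,2,3,4,5]]]

/-- `p` describes how conjugation by `g` permutes the totals. -/
def Good (g : G) (p : G) : Prop := ∀ i, conjF g (t i) = t (p i)

lemma gen_good : ∀ a b i : Fin 6, conjF (Equiv.swap a b) (t i) = t (B a b i) := by decide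

lemma t_inj : ∀ i j : Fin 6, t i = t j → i = j := by decide

lemma conjF_mul (g h : G) (S : Finset G) : conjF (g * h) S = conjF g (conjF h S) := by
  simp only [conjF, Finset.image_image]
  apply Finset.image_congr
  intro x _
  simp [mul_inv_rev, mul_assoc]

lemma Good_mul {g h p q : G} (hg : Good g p) (hh : Good h q) : Good (g * h) (p * q) := by
  intro i
  rw [conjF_mul, hh i, hg (q i)]
  rfl

lemma Good_unique {g p q : G} (hp : Good g p) (hq : Good g q) : p = q := by
  apply Equiv.ext
  intro i
  exact t_inj _ _ ((hp i).symm.trans (hq i))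

/-! Decomposition of a permutation into transpositions `swap a k`, `k = 5,4,3,2,1,0`. -/

def q5 (g : G) : G := g
def q4 (g : G) : G := Equiv.swap (q5 g 5) 5 * q5 g
def q3 (g : G) : G := Equiv.swap (q4 g 4) 4 * q4 g
def q2 (g : G) : G := Equiv.swap (q3 g 3) 3 * q3 g
def q1 (g : G) : G := Equiv.swap (q2 g 2) 2 * q2 g
def q0 (g : G) : G := Equiv.swap (q1 g 1) 1 * q1 g
def qm (g : G) : G := Equiv.swap (q0 g 0) 0 * q0 g

def Pfix (n : ℕ) (g : G) : Prop := ∀ j : Fin 6, n ≤ j.val → g j = j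

lemma step_fix (k : Fin 6) (g : G) (h : Pfix (k.val + 1) g) :
    Pfix k.val (Equiv.swap (g k) k * g) := by
  intro j hj
  rcases eq_or_lt_of_le hj with heq | hlt
  · have hk : j = k := Fin.ext heq.symm
    subst hk
    simp [Equiv.Perm.mul_apply, Equiv.swap_apply_left]
  · have hgj : g j = j := h j hlt
    have hne2 : j ≠ k := Fin.ne_of_val_ne (by omega)
    have hne1 : j ≠ g k := fun e => hne2 (g.injective (hgj.trans e))
    rw [Equiv.Perm.mul_apply, hgj, Equiv.swap_apply_of_ne_of_ne hne1 hne2]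

lemma qm_eq_one (g : G) : qm g = 1 := by
  have p6 : Pfix 6 (q5 g) := fun j hj => absurd j.isLt (by omega)
  have p5 : Pfix 5 (q4 g) := step_fix 5 (q5 g) p6
  have p4 : Pfix 4 (q3 g) := step_fix 4 (q4 g) p5
  have p3 : Pfix 3 (q2 g) := step_fix 3 (q3 g) p4
  have p2 : Pfix 2 (q1 g) := step_fix 2 (q2 g) p3
  have p1 : Pfix 1 (q0 g) := step_fix 1 (q1 g) p2
  have p0 : Pfix 0 (qm g) := step_fix 0 (q0 g) p1
  exact Equiv.ext fun j => (p0 j (Nat.zero_le _))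

lemma swap_cancel (a k : Fin 6) (x y : G) (h : Equiv.swap a k * x = y) :
    x = Equiv.swap a k * y := by
  rw [← h, Equiv.swap_mul_self_mul]

lemma decomp (g : G) :
    g = Equiv.swap (q5 g 5) 5 * (Equiv.swap (q4 g 4) 4 * (Equiv.swap (q3 g 3) 3 *
      (Equiv.swap (q2 g 2) 2 * (Equiv.swap (q1 g 1) 1 * Equiv.swap (q0 g 0) 0)))) := by
  have h : Equiv.swap (q0 g 0) 0 * (Equiv.swap (q1 g 1) 1 * (Equiv.swap (q2 g 2) 2 *
      (Equiv.swap (q3 g 3) 3 * (Equiv.swap (q4 g 4) 4 * (Equiv.swap (q5 g 5) 5 * g))))) = 1 := by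
    have := qm_eq_one g
    simpa [qm, q0, q1, q2, q3, q4, q5, mul_assoc] using this
  have c1 := swap_cancel _ _ _ _ h
  have c2 := swap_cancel _ _ _ _ c1
  have c3 := swap_cancel _ _ _ _ c2
  have c4 := swap_cancel _ _ _ _ c3
  have c5 := swap_cancel _ _ _ _ c4
  have c6 := swap_cancel _ _ _ _ c5
  simpa [mul_assoc] using c6

/-- The outer automorphism as a function. -/
def Fm (g : G) : G :=
  B (q5 g 5) 5 * (B (q4 g 4) 4 * (B (q3 g 3) 3 * (B (q2 g 2) 2 * (B (q1 g 1) 1 * B (q0 g 0) 0))))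

lemma good_all (g : G) : Good g (Fm g) := by
  have h : Good (Equiv.swap (q5 g 5) 5 * (Equiv.swap (q4 g 4) 4 * (Equiv.swap (q3 g 3) 3 *
      (Equiv.swap (q2 g 2) 2 * (Equiv.swap (q1 g 1) 1 * Equiv.swap (q0 g 0) 0))))) (Fm g) :=
    Good_mul (gen_good _ _) (Good_mul (gen_good _ _) (Good_mul (gen_good _ _)
      (Good_mul (gen_good _ _) (Good_mul (gen_good _ _) (gen_good _ _)))))
  rw [← decomp g] at h
  exact h

lemma Fm_mul (g h : G) : Fm (g * h) = Fm g * Fm h :=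
  Good_unique (good_all (g * h)) (Good_mul (good_all g) (good_all h))

def ψ : G →* G := MonoidHom.mk' Fm Fm_mul

lemma C_maps : ∀ a b : Fin 6, Fm (C a b) = Equiv.swap a b := by decide

lemma ψ_surj : Function.Surjective ψ := by
  rw [← MonoidHom.range_eq_top]
  rw [eq_top_iff, ← Equiv.Perm.closure_isSwap]
  rw [Subgroup.closure_le]
  rintro σ ⟨a, b, -, rfl⟩
  exact ⟨C a b, C_maps a b⟩

noncomputable def φ : MulAut G :=
  MulEquiv.ofBijective ψ ⟨Finite.injective_iff_surjective.mpr ψ_surj, ψ_surj⟩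

lemma φ_apply (σ : G) (x : Fin 6) : φ σ x = Fm σ x := rfl

lemma nofix : ∀ x : Fin 6, Fm (Equiv.swap 0 1) x ≠ x := by decide

end S6Outer

theorem symm_group_six_outer_aut :
    ∃ φ : MulAut (Equiv.Perm (Fin 6)),
      ¬ ∃ g : Equiv.Perm (Fin 6), ∀ σ : Equiv.Perm (Fin 6), φ σ = g * σ * g⁻¹ := by
  refine ⟨S6Outer.φ, ?_⟩
  rintro ⟨g, hg⟩
  have h := hg (Equiv.swap 0 1)
  have h2 := Equiv.ext_iff.mp h (g 2)
  rw [Equiv.Perm.mul_apply, Equiv.Perm.mul_apply, Equiv.Perm.inv_def, Equiv.symm_apply_apply,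
    Equiv.swap_apply_of_ne_of_ne (by decide) (by decide)] at h2
  exact S6Outer.nofix (g 2) (S6Outer.φ_apply (Equiv.swap 0 1) (g 2) ▸ h2)
end
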